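/- arXiv:math/0603387 — 13 statements merged into one kernel-verified Lean document; each statement's English description precedes it below -/
import Mathlib

section
/- Let p be an odd prime and q ∈ 1 + pℤ_p with q ≠ 1. Then ι_q : ℤ_p → ℤ_p is a bijective isometry: it is bijective and satisfies |ι_q(z) − ι_q(z')|_p = |z − z'|_p for all z, z' ∈ ℤ_p. -/
open Finset

variable {p : ℕ} [Fact p.Prime]

/-- Ultrametric: if `‖a - b‖ < ‖b‖` then `‖a‖ = ‖b‖`. -/
lemma aux_norm_eq {a b : ℤ_[p]} (h : ‖a - b‖ < ‖b‖) : ‖a‖ = ‖b‖ := by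
  have hab : a = b + (a - b) := by ring
  have h1 : ‖a‖ ≤ ‖b‖ := by
    calc ‖a‖ = ‖b + (a - b)‖ := by rw [← hab]
    _ ≤ max ‖b‖ ‖a - b‖ := PadicInt.nonarchimedean _ _
    _ = ‖b‖ := max_eq_left h.le
  refine le_antisymm h1 ?_
  by_contra hcon
  push_neg at hcon
  have hba : b = a + (b - a) := by ring
  have h2 : ‖b‖ ≤ max ‖a‖ ‖b - a‖ := by
    nth_rewrite 1 [hba]; exact PadicInt.nonarchimedean _ _
  rw [norm_sub_rev] at h2
  have : max ‖a‖ ‖a - b‖ < ‖b‖ := max_lt hcon h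
  exact absurd (h2.trans_lt this) (lt_irrefl _)

lemma aux_norm_le_of_dvd {c x : ℤ_[p]} (h : c ∣ x) : ‖x‖ ≤ ‖c‖ := by
  obtain ⟨y, rfl⟩ := h
  rw [norm_mul]
  calc ‖c‖ * ‖y‖ ≤ ‖c‖ * 1 := by
        exact mul_le_mul_of_nonneg_left (PadicInt.norm_le_one y) (norm_nonneg c)
  _ = ‖c‖ := mul_one _

lemma aux_geom (q : ℤ_[p]) (i : ℕ) :
    q ^ i - 1 = (q - 1) * ∑ j ∈ range i, q ^ j := by
  rw [mul_comm, geom_sum_mul]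

/-- `p ∣ S_q(n) - n` when `p ∣ q - 1`. -/
lemma aux_dvd_sum_sub {q : ℤ_[p]} (hq : (p : ℤ_[p]) ∣ q - 1) (n : ℕ) :
    (p : ℤ_[p]) ∣ (∑ i ∈ range n, q ^ i) - n := by
  induction n with
  | zero => simp
  | succ n ih =>
    have : (∑ i ∈ range (n + 1), q ^ i) - (n + 1 : ℕ) =
        ((∑ i ∈ range n, q ^ i) - n) + (q ^ n - 1) := by
      rw [Finset.sum_range_succ]; push_cast; ring
    rw [this]
    exact dvd_add ih (dvd_trans hq ⟨∑ j ∈ range n, q ^ j, aux_geom q n⟩)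

/-- Key: for odd `p` and `p ∣ q - 1`, `p² ∣ S_q(p) - p`. -/
lemma aux_key (hp : Odd p) {q : ℤ_[p]} (hq : (p : ℤ_[p]) ∣ q - 1) :
    (p : ℤ_[p]) ^ 2 ∣ (∑ i ∈ range p, q ^ i) - p := by
  have heq : (∑ i ∈ range p, q ^ i) - p =
      (q - 1) * ∑ i ∈ range p, (∑ j ∈ range i, q ^ j) := by
    rw [Finset.mul_sum]
    have : ∀ i ∈ range p, (q - 1) * ∑ j ∈ range i, q ^ j = q ^ i - 1 :=
      fun i _ => (aux_geom q i).symm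
    rw [Finset.sum_congr rfl this, Finset.sum_sub_distrib]
    simp
  rw [heq, sq]
  refine mul_dvd_mul hq ?_
  -- p ∣ ∑ S_q(i) : each S_q(i) ≡ i, and ∑_{i<p} i = p(p-1)/2 ≡ 0 for odd p
  have h1 : (p : ℤ_[p]) ∣ (∑ i ∈ range p, (∑ j ∈ range i, q ^ j)) -
      (∑ i ∈ range p, (i : ℤ_[p])) := by
    rw [← Finset.sum_sub_distrib]
    exact Finset.dvd_sum fun i _ => aux_dvd_sum_sub hq i
  have h2 : (p : ℤ_[p]) ∣ ∑ i ∈ range p, (i : ℤ_[p]) := by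
    have hs : (∑ i ∈ range p, (i : ℤ_[p])) = ((∑ i ∈ range p, i : ℕ) : ℤ_[p]) := by
      push_cast; rfl
    rw [hs, Finset.sum_range_id]
    obtain ⟨k, hk⟩ := hp
    have hp1 : p * (p - 1) = 2 * (p * k) := by
      have : p - 1 = 2 * k := by omega
      rw [this]; ring
    have : p * (p - 1) / 2 = p * k := by omega
    rw [this]
    push_cast
    exact Dvd.intro k rfl
  have := dvd_add h1 h2
  rwa [sub_add_cancel] at this

lemma aux_norm_geom_p (hp : Odd p) {q : ℤ_[p]} (hq : (p : ℤ_[p]) ∣ q - 1) :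
    ‖∑ i ∈ range p, q ^ i‖ = ‖(p : ℤ_[p])‖ := by
  have hple : ‖(∑ i ∈ range p, q ^ i) - p‖ ≤ ‖(p : ℤ_[p]) ^ 2‖ :=
    aux_norm_le_of_dvd (aux_key hp hq)
  have hp2 : (2 : ℕ) ≤ p := (Fact.out : p.Prime).two_le
  have hppos : (0 : ℝ) < p := by exact_mod_cast (Fact.out : p.Prime).pos
  have hlt : ‖(p : ℤ_[p]) ^ 2‖ < ‖(p : ℤ_[p])‖ := by
    rw [sq, norm_mul, PadicInt.norm_p]
    have h1 : (p : ℝ)⁻¹ < 1 := by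
      rw [inv_lt_one₀ hppos]; exact_mod_cast hp2.trans_lt' one_lt_two
    calc (p : ℝ)⁻¹ * (p : ℝ)⁻¹ < 1 * (p : ℝ)⁻¹ :=
          mul_lt_mul_of_pos_right h1 (by positivity)
    _ = (p : ℝ)⁻¹ := one_mul _
  exact aux_norm_eq (hple.trans_lt hlt)

lemma aux_norm_p_lt_one : ‖(p : ℤ_[p])‖ < 1 := by
  rw [PadicInt.norm_p]
  have h1 : (1 : ℝ) < p := by exact_mod_cast (Fact.out : p.Prime).one_lt
  rw [inv_lt_one₀ (by linarith)]
  exact h1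

lemma aux_norm_natCast_eq_one {n : ℕ} (hn : ¬ p ∣ n) : ‖(n : ℤ_[p])‖ = 1 := by
  have h1 : ¬ ((p : ℤ) ∣ (n : ℤ)) := by exact_mod_cast hn
  have h2 : ¬ ‖((n : ℤ) : ℤ_[p])‖ < 1 := fun h =>
    h1 ((PadicInt.norm_int_lt_one_iff_dvd n).mp h)
  push_cast at h2
  exact le_antisymm (PadicInt.norm_le_one _) (not_lt.mp h2)

/-- Main norm computation: `‖q^n - 1‖ = ‖q - 1‖ · ‖n‖` for odd `p`, `p ∣ q - 1`. -/
lemma aux_norm_pow_sub_one (hp : Odd p) :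
    ∀ n : ℕ, ∀ q : ℤ_[p], (p : ℤ_[p]) ∣ q - 1 →
      ‖q ^ n - 1‖ = ‖q - 1‖ * ‖(n : ℤ_[p])‖ := by
  intro n
  induction n using Nat.strong_induction_on with
  | _ n ih =>
    intro q hq
    rcases Nat.eq_zero_or_pos n with rfl | hn
    · simp
    by_cases hdvd : p ∣ n
    · obtain ⟨m, rfl⟩ := hdvd
      have hppos : 0 < p := (Fact.out : p.Prime).pos
      have hm0 : 0 < m := by
        rcases Nat.eq_zero_or_pos m with rfl | h
        · simp at hn
        · exact h
      have hm : m < p * m := by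
        nlinarith [(Fact.out : p.Prime).one_lt, hm0]
      have hqp : (p : ℤ_[p]) ∣ q ^ p - 1 :=
        dvd_trans hq ⟨∑ j ∈ range p, q ^ j, aux_geom q p⟩
      have h1 : ‖q ^ (p * m) - 1‖ = ‖(q ^ p) ^ m - 1‖ := by rw [pow_mul]
      rw [h1, ih m hm (q ^ p) hqp]
      have h2 : ‖q ^ p - 1‖ = ‖q - 1‖ * ‖(p : ℤ_[p])‖ := by
        rw [aux_geom q p, norm_mul, aux_norm_geom_p hp hq]
      rw [h2]
      have h3 : ((p * m : ℕ) : ℤ_[p]) = (p : ℤ_[p]) * m := by push_cast; ring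
      rw [h3, norm_mul, mul_assoc]

    · -- n coprime to p : ‖S_q(n)‖ = ‖n‖ = 1
      have hn1 : ‖(n : ℤ_[p])‖ = 1 := aux_norm_natCast_eq_one hdvd
      have hS : ‖∑ i ∈ range n, q ^ i‖ = 1 := by
        have hsub : ‖(∑ i ∈ range n, q ^ i) - n‖ < ‖(n : ℤ_[p])‖ := by
          rw [hn1]
          calc ‖(∑ i ∈ range n, q ^ i) - n‖ ≤ ‖(p : ℤ_[p])‖ :=
                aux_norm_le_of_dvd (aux_dvd_sum_sub hq n)
          _ < 1 := aux_norm_p_lt_one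
        rw [aux_norm_eq hsub, hn1]
      rw [aux_geom q n, norm_mul, hS, hn1, mul_one]

/-- An isometry of a compact metric space into itself is surjective. -/
lemma aux_surj_of_isometry {X : Type*} [MetricSpace X] [CompactSpace X] {f : X → X}
    (hf : Isometry f) : Function.Surjective f := by
  have hiter : ∀ k : ℕ, Isometry (f^[k]) := by
    intro k
    induction k with
    | zero => simpa using isometry_id
    | succ k ihk => rw [Function.iterate_succ]; exact ihk.comp hf
  intro y
  have hcl : IsClosed (Set.range f) := (isCompact_range hf.continuous).isClosed
  have hmem : y ∈ closure (Set.range f) := by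
    rw [Metric.mem_closure_iff]
    intro ε hε
    obtain ⟨x, -, φ, hφ, hconv⟩ :=
      isCompact_univ.tendsto_subseq (x := fun n => f^[n] y) fun n => Set.mem_univ _
    have hC : CauchySeq ((fun n => f^[n] y) ∘ φ) := hconv.cauchySeq
    rw [Metric.cauchySeq_iff] at hC
    obtain ⟨N, hN⟩ := hC ε hε
    have hlt : φ N < φ (N + 1) := hφ (Nat.lt_succ_self N)
    set k := φ (N + 1) - φ N with hk
    have hk1 : 1 ≤ k := by omega
    have hiterate : f^[φ (N + 1)] y = f^[φ N] (f^[k] y) := by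
      rw [← Function.iterate_add_apply]
      congr 1
      omega
    have hd : dist (f^[φ (N + 1)] y) (f^[φ N] y) < ε := hN _ (Nat.le_succ N) _ le_rfl
    rw [hiterate, (hiter (φ N)).dist_eq] at hd
    obtain ⟨j, hj⟩ : ∃ j, k = j + 1 := ⟨k - 1, by omega⟩
    refine ⟨f^[k] y, ⟨f^[j] y, ?_⟩, ?_⟩
    · rw [hj]
      exact (Function.iterate_succ_apply' f j y).symm
    · rw [dist_comm] at hd
      exact hd
  rwa [hcl.closure_eq] at hmem

/-- For `p` odd and `q ∈ 1 + pℤ_p`, `q ≠ 1`, the interpolation `ι_q : ℤ_p → ℤ_p`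
is a bijective isometry. -/
theorem iota_bijective_isometry (p : ℕ) [Fact p.Prime] (hp : Odd p)
    (q : ℤ_[p]) (hq : (p : ℤ_[p]) ∣ q - 1) (hq1 : q ≠ 1)
    (ι : ℤ_[p] → ℤ_[p]) (hcont : Continuous ι)
    (hval : ∀ n : ℕ, ι n = ∑ i ∈ Finset.range n, q ^ i) :
    Function.Bijective ι ∧ ∀ z z' : ℤ_[p], ‖ι z - ι z'‖ = ‖z - z'‖ := by
  have hq0 : q - 1 ≠ 0 := sub_ne_zero.mpr hq1
  have hqn0 : ‖q - 1‖ ≠ 0 := norm_ne_zero_iff.mpr hq0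
  have hqlt : ‖q - 1‖ < 1 :=
    lt_of_le_of_lt (aux_norm_le_of_dvd hq) aux_norm_p_lt_one
  have hqone : ‖q‖ = 1 := by
    have : ‖q - 1‖ < ‖(1 : ℤ_[p])‖ := by rwa [norm_one]
    simpa [norm_one] using aux_norm_eq this
  have hqpow : ∀ k : ℕ, ‖q ^ k‖ = 1 := by
    intro k
    induction k with
    | zero => simp
    | succ k ihk => rw [pow_succ, norm_mul, ihk, hqone, one_mul]
  -- isometry on natural numbers
  have hnat : ∀ m n : ℕ, n ≤ m → ‖ι m - ι n‖ = ‖(m : ℤ_[p]) - n‖ := by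
    intro m n hnm
    have hmain : (ι m - ι n) * (q - 1) = q ^ n * (q ^ (m - n) - 1) := by
      rw [hval m, hval n, sub_mul, geom_sum_mul, geom_sum_mul, mul_sub, mul_one,
        ← pow_add, Nat.add_sub_cancel' hnm]
      ring
    have hnorm := congrArg (‖·‖) hmain
    change ‖(ι m - ι n) * (q - 1)‖ = ‖q ^ n * (q ^ (m - n) - 1)‖ at hnorm
    rw [norm_mul, norm_mul, hqpow n, one_mul,
      aux_norm_pow_sub_one hp (m - n) q hq] at hnorm
    have hcast : ((m - n : ℕ) : ℤ_[p]) = (m : ℤ_[p]) - n := by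
      push_cast [Nat.cast_sub hnm]; ring
    rw [hcast] at hnorm
    rw [mul_comm ‖q - 1‖] at hnorm
    exact mul_right_cancel₀ hqn0 hnorm
  have hnat' : ∀ m n : ℕ, ‖ι m - ι n‖ = ‖(m : ℤ_[p]) - n‖ := by
    intro m n
    rcases le_total n m with h | h
    · exact hnat m n h
    · rw [norm_sub_rev, hnat n m h, norm_sub_rev]
  -- extend to all of ℤ_p by density
  have hisom : ∀ z z' : ℤ_[p], ‖ι z - ι z'‖ = ‖z - z'‖ := by
    have hdense : DenseRange (Prod.map (Nat.cast : ℕ → ℤ_[p]) (Nat.cast : ℕ → ℤ_[p])) :=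
      (PadicInt.denseRange_natCast).prodMap (PadicInt.denseRange_natCast)
    have hF : Continuous fun zz : ℤ_[p] × ℤ_[p] => ‖ι zz.1 - ι zz.2‖ :=
      ((hcont.comp continuous_fst).sub (hcont.comp continuous_snd)).norm
    have hG : Continuous fun zz : ℤ_[p] × ℤ_[p] => ‖zz.1 - zz.2‖ :=
      (continuous_fst.sub continuous_snd).norm
    have heq := hdense.equalizer hF hG (by
      funext mn
      exact hnat' mn.1 mn.2)
    intro z z'
    exact congrFun heq (z, z')
  refine ⟨⟨?_, ?_⟩, hisom⟩
  · intro z z' h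
    have : ‖z - z'‖ = 0 := by rw [← hisom, h, sub_self, norm_zero]
    exact sub_eq_zero.mp (norm_eq_zero.mp this)
  · exact aux_surj_of_isometry (Isometry.of_dist_eq fun z z' => by
      rw [dist_eq_norm, dist_eq_norm, hisom])
end

section
/- Let q ∈ ℤ_2^× with q ≡ 3 (mod 4), and set l_0 = v_2(q + 1). Then the image of ι_q : ℤ_2 → ℤ_2 is 2^{l_0}ℤ_2 ∪ (1 + 2^{l_0}ℤ_2). -/
open Finset in
private lemma iota_gs_add (q : ℤ_[2]) (m n : ℕ) :
    ∑ i ∈ range (m + n), q ^ i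
      = (∑ i ∈ range m, q ^ i) + q ^ m * ∑ i ∈ range n, q ^ i := by
  induction n with
  | zero => simp
  | succ n ih =>
      rw [← Nat.add_assoc, Finset.sum_range_succ, ih, Finset.sum_range_succ]
      ring

open Finset in
private lemma iota_gs_two (q : ℤ_[2]) (m : ℕ) :
    ∑ i ∈ range (2 * m), q ^ i = (1 + q) * ∑ j ∈ range m, (q ^ 2) ^ j := by
  induction m with
  | zero => simp
  | succ m ih =>
      have h2 : 2 * (m + 1) = 2 * m + 1 + 1 := by ring
      rw [h2, Finset.sum_range_succ, Finset.sum_range_succ, ih, Finset.sum_range_succ]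
      ring

private lemma iota_two_dvd_iff (x : ℤ_[2]) :
    (2 : ℤ_[2]) ∣ x ↔ PadicInt.toZMod x = 0 := by
  have h2 : ((2 : ℕ) : ℤ_[2]) = (2 : ℤ_[2]) := by norm_cast
  rw [show ((2:ℤ_[2]) ∣ x) ↔ x ∈ Ideal.span {((2:ℕ) : ℤ_[2])} by
        rw [Ideal.mem_span_singleton, h2],
      ← PadicInt.maximalIdeal_eq_span_p, ← PadicInt.ker_toZMod, RingHom.mem_ker]

private lemma iota_odd_sub_one {x : ℤ_[2]} (hx : ¬ (2 : ℤ_[2]) ∣ x) :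
    (2 : ℤ_[2]) ∣ x - 1 := by
  rw [iota_two_dvd_iff] at hx ⊢
  have : ∀ c : ZMod 2, c ≠ 0 → c = 1 := by decide
  rw [map_sub, map_one, this _ hx, sub_self]

private lemma iota_prime_two : Prime (2 : ℤ_[2]) := by
  have h2 : ((2 : ℕ) : ℤ_[2]) = (2 : ℤ_[2]) := by norm_cast
  rw [← h2]; exact PadicInt.prime_p

private lemma iota_pow_dvd_iff_norm (n : ℕ) (x : ℤ_[2]) :
    (2 : ℤ_[2]) ^ n ∣ x ↔ ‖x‖ ≤ (2 : ℝ) ^ (-(n : ℤ)) := by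
  have h2 : ((2 : ℕ) : ℤ_[2]) = (2 : ℤ_[2]) := by norm_cast
  have := PadicInt.norm_le_pow_iff_mem_span_pow x n (p := 2)
  rw [Ideal.mem_span_singleton, h2] at this
  rw [← this]; norm_num

/-- For `q ∈ ℤ_2^×` with `q ≡ 3 (mod 4)`, `q ≠ −1`, and `l₀ = v_2(q+1)`,
the image of `ι_q : ℤ_2 → ℤ_2` is `2^{l₀}ℤ_2 ∪ (1 + 2^{l₀}ℤ_2)`. -/
theorem iota_range_two (q : ℤ_[2]) (hq : (4 : ℤ_[2]) ∣ q - 3) (hqm : q ≠ -1)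
    (l₀ : ℕ) (hl₀ : (q + 1).valuation = (l₀ : ℤ))
    (ι : ℤ_[2] → ℤ_[2]) (hcont : Continuous ι)
    (hval : ∀ n : ℕ, ι n = ∑ i ∈ Finset.range n, q ^ i) :
    Set.range ι =
      {x : ℤ_[2] | (2 : ℤ_[2]) ^ l₀ ∣ x} ∪ {x : ℤ_[2] | (2 : ℤ_[2]) ^ l₀ ∣ x - 1} := by
  have hodd1 : ¬ (2 : ℤ_[2]) ∣ 1 := by
    intro h
    have := (PadicInt.norm_lt_one_iff_dvd (1 : ℤ_[2])).2 (by exact_mod_cast h)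
    simp at this
  have h24 : (2 : ℤ_[2]) ∣ 4 := ⟨2, by norm_num⟩
  have hoddq : ¬ (2 : ℤ_[2]) ∣ q := by
    intro h
    have h3 : (2 : ℤ_[2]) ∣ (3 : ℤ_[2]) := by
      have h' : (2 : ℤ_[2]) ∣ q - 3 := dvd_trans h24 hq
      have := dvd_sub h h'
      simpa using this
    have : (2 : ℤ_[2]) ∣ 1 := by
      have := dvd_sub h3 (dvd_refl 2)
      norm_num at this
      exact this
    exact hodd1 this
  obtain ⟨t, ht⟩ := hq
  have hql : q - 1 = 2 * (1 + 2 * t) := by rw [show q = q - 3 + 3 by ring, ht]; ring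
  have hq4 : (4 : ℤ_[2]) ∣ q + 1 := ⟨t + 1, by rw [show q + 1 = q - 3 + 4 by ring, ht]; ring⟩
  have hne : q + 1 ≠ 0 := fun h => hqm (by linear_combination h)
  have hvd : ∀ n : ℕ, (2 : ℤ_[2]) ^ n ∣ q + 1 ↔ (n : ℤ) ≤ (q + 1).valuation := by
    intro n
    have h2 : ((2 : ℕ) : ℤ_[2]) = (2 : ℤ_[2]) := by norm_cast
    rw [Nat.cast_le, ← PadicInt.mem_span_pow_iff_le_valuation _ hne, Ideal.mem_span_singleton, h2]
  have hd : (2 : ℤ_[2]) ^ l₀ ∣ q + 1 := (hvd l₀).2 (by rw [hl₀])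
  have hnd : ¬ (2 : ℤ_[2]) ^ (l₀ + 1) ∣ q + 1 := by
    intro h
    have := (hvd (l₀ + 1)).1 h
    rw [hl₀] at this
    omega
  have hl2 : 2 ≤ l₀ := by
    by_contra h
    push_neg at h
    exact hnd (dvd_trans (pow_dvd_pow 2 (by omega : l₀ + 1 ≤ 2))
      (by rw [show ((2:ℤ_[2])^2 : ℤ_[2]) = 4 by norm_num]; exact hq4))
  obtain ⟨u, hu⟩ := hd
  have hoddu : ¬ (2 : ℤ_[2]) ∣ u := by
    intro ⟨v, hv⟩
    exact hnd ⟨v, by rw [hu, hv, pow_succ]; ring⟩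
  have hoddmul : ∀ x y : ℤ_[2], ¬ (2:ℤ_[2]) ∣ x → ¬ (2:ℤ_[2]) ∣ y → ¬ (2:ℤ_[2]) ∣ x * y := by
    intro x y hx hy h
    rcases (iota_prime_two.dvd_mul).1 h with h | h
    exacts [hx h, hy h]
  have hoddqpow : ∀ m : ℕ, ¬ (2:ℤ_[2]) ∣ q ^ m := by
    intro m h
    exact hoddq (iota_prime_two.dvd_of_dvd_pow h)
  have hq2 : q ^ 2 - 1 = 2 ^ (l₀ + 1) * ((1 + 2 * t) * u) := by
    have : q ^ 2 - 1 = (q - 1) * (q + 1) := by ring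
    rw [this, hql, hu, pow_succ]; ring
  have hq2m : ∀ m : ℕ, (2:ℤ_[2]) ^ (l₀ + 1) ∣ q ^ (2 * m) - 1 := by
    intro m
    have := geom_sum_mul (q ^ 2) m
    rw [pow_mul]
    exact ⟨((1 + 2 * t) * u) * ∑ i ∈ Finset.range m, (q^2)^i, by
      rw [← this, hq2]; ring⟩
  have hfac : ∀ k : ℕ, ∃ w : ℤ_[2], ¬ (2:ℤ_[2]) ∣ w ∧ 1 + q ^ (2 ^ (k+1)) = 2 * w := by
    intro k
    obtain ⟨g, hg⟩ := hq2m (2 ^ k)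
    have h4 : (2:ℤ_[2]) ^ 2 ∣ q ^ (2 * 2 ^ k) - 1 :=
      dvd_trans (pow_dvd_pow 2 (by omega)) ⟨g, hg⟩
    obtain ⟨g', hg'⟩ := h4
    refine ⟨1 + 2 * g', fun ⟨s, hs⟩ => hodd1 ⟨s - g', by
      rw [show (1:ℤ_[2]) = 1 + 2*g' - 2*g' by ring, hs]; ring⟩, ?_⟩
    have : q ^ (2 ^ (k+1)) = q ^ (2 * 2 ^ k) := by rw [pow_succ]; ring_nf
    rw [this, show q ^ (2*2^k) = (q ^ (2*2^k) - 1) + 1 by ring, hg']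
    norm_num; ring
  have hE : ∀ k : ℕ, ∃ v : ℤ_[2], ¬ (2:ℤ_[2]) ∣ v ∧
      (∑ i ∈ Finset.range (2 ^ (k+1)), q ^ i) = 2 ^ (l₀ + k) * v := by
    intro k
    induction k with
    | zero =>
        refine ⟨u, hoddu, ?_⟩
        rw [show (2:ℕ)^1 = 2 by norm_num, Finset.sum_range_succ, Finset.sum_range_succ]
        simpa [add_comm] using hu
    | succ k ih =>
        obtain ⟨v, hv, hSv⟩ := ih
        obtain ⟨w, hw, hfw⟩ := hfac k
        refine ⟨v * w, hoddmul _ _ hv hw, ?_⟩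
        have hsplit : (2:ℕ) ^ (k+2) = 2 ^ (k+1) + 2 ^ (k+1) := by ring
        rw [hsplit, iota_gs_add, hSv]
        calc 2 ^ (l₀ + k) * v + q ^ 2 ^ (k + 1) * (2 ^ (l₀ + k) * v)
            = 2 ^ (l₀ + k) * v * (1 + q ^ 2 ^ (k+1)) := by ring
          _ = 2 ^ (l₀ + (k+1)) * (v * w) := by
              rw [hfw, show l₀ + (k+1) = (l₀+k)+1 from rfl, pow_succ]; ring
  have hF1 : ∀ m : ℕ, (2:ℤ_[2]) ^ l₀ ∣ ∑ i ∈ Finset.range (2 * m), q ^ i := by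
    intro m
    rw [iota_gs_two]
    exact Dvd.dvd.mul_right ⟨u, by rw [← hu]; ring⟩ _
  have hF2 : ∀ m : ℕ, (2:ℤ_[2]) ^ l₀ ∣ (∑ i ∈ Finset.range (2 * m + 1), q ^ i) - 1 := by
    intro m
    rw [Finset.sum_range_succ]
    have h1 : (2:ℤ_[2]) ^ l₀ ∣ q ^ (2 * m) - 1 :=
      dvd_trans (pow_dvd_pow 2 (by omega)) (hq2m m)
    have := dvd_add (hF1 m) h1
    convert this using 1; ring
  -- RHS is closed
  have hball : ∀ c : ℤ_[2], IsClosed {x : ℤ_[2] | (2:ℤ_[2])^l₀ ∣ x - c} := by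
    intro c
    have : {x : ℤ_[2] | (2:ℤ_[2])^l₀ ∣ x - c} = Metric.closedBall c ((2:ℝ)^(-(l₀:ℤ))) := by
      ext x
      simp only [Set.mem_setOf_eq, Metric.mem_closedBall, dist_eq_norm]
      exact iota_pow_dvd_iff_norm l₀ (x - c)
    rw [this]; exact Metric.isClosed_closedBall
  have hclosed : IsClosed ({x : ℤ_[2] | (2 : ℤ_[2]) ^ l₀ ∣ x}
      ∪ {x : ℤ_[2] | (2 : ℤ_[2]) ^ l₀ ∣ x - 1}) := by
    have h0 : {x : ℤ_[2] | (2 : ℤ_[2]) ^ l₀ ∣ x}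
        = {x : ℤ_[2] | (2:ℤ_[2])^l₀ ∣ x - 0} := by simp
    rw [h0]; exact (hball 0).union (hball 1)
  -- the image of ℕ lands in the RHS
  have himgN : ∀ n : ℕ, ι n ∈ {x : ℤ_[2] | (2 : ℤ_[2]) ^ l₀ ∣ x}
      ∪ {x : ℤ_[2] | (2 : ℤ_[2]) ^ l₀ ∣ x - 1} := by
    intro n
    rcases Nat.even_or_odd n with ⟨m, hm⟩ | ⟨m, hm⟩
    · left
      rw [Set.mem_setOf_eq, hval n, hm, show m + m = 2 * m by ring]
      exact hF1 m
    · right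
      rw [Set.mem_setOf_eq, hval n, hm]
      exact hF2 m
  -- forward inclusion
  have hforward : Set.range ι ⊆ {x : ℤ_[2] | (2 : ℤ_[2]) ^ l₀ ∣ x}
      ∪ {x : ℤ_[2] | (2 : ℤ_[2]) ^ l₀ ∣ x - 1} := by
    rintro _ ⟨z, rfl⟩
    have hz : z ∈ closure (Set.range (Nat.cast : ℕ → ℤ_[2])) :=
      PadicInt.denseRange_natCast z
    have h1 : ι z ∈ ι '' closure (Set.range (Nat.cast : ℕ → ℤ_[2])) := ⟨z, hz, rfl⟩
    have h2 := image_closure_subset_closure_image hcont h1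
    refine hclosed.closure_subset (closure_mono ?_ h2)
    rintro _ ⟨_, ⟨n, rfl⟩, rfl⟩
    exact himgN n
  -- approximation lemma
  have hL : ∀ y : ℤ_[2], (2:ℤ_[2])^l₀ ∣ y → ∀ k : ℕ, ∃ m : ℕ,
      (2:ℤ_[2])^(l₀+k) ∣ (∑ i ∈ Finset.range m, q ^ i) - y := by
    intro y hy k
    induction k with
    | zero => exact ⟨0, by simpa using hy.neg_right⟩
    | succ k ih =>
        obtain ⟨m, b, hb⟩ := ih
        by_cases hb2 : (2:ℤ_[2]) ∣ b
        · obtain ⟨c, hc⟩ := hb2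
          exact ⟨m, c, by rw [hb, hc, show l₀ + (k+1) = (l₀+k)+1 from rfl, pow_succ]; ring⟩
        · obtain ⟨v, hv, hSv⟩ := hE k
          refine ⟨m + 2 ^ (k+1), ?_⟩
          rw [iota_gs_add, hSv]
          have hsum : (∑ i ∈ Finset.range m, q^i) + q^m * (2^(l₀+k)*v) - y
              = 2^(l₀+k) * (b + q^m * v) := by linear_combination hb
          rw [hsum]
          have hoddb : (2:ℤ_[2]) ∣ b - 1 := iota_odd_sub_one hb2
          have hoddqv : (2:ℤ_[2]) ∣ q^m * v - 1 :=
            iota_odd_sub_one (hoddmul _ _ (hoddqpow m) hv)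
          have h2bv : (2:ℤ_[2]) ∣ b + q^m * v := by
            have := dvd_add (dvd_add hoddb hoddqv) (dvd_refl 2)
            convert this using 1; ring
          obtain ⟨c, hc⟩ := h2bv
          exact ⟨c, by rw [hc, show l₀ + (k+1) = (l₀+k)+1 from rfl, pow_succ]; ring⟩
  -- q is a unit
  have hqunit : IsUnit q := by
    rw [PadicInt.isUnit_iff]
    have h2c : ((2:ℕ) : ℤ_[2]) = (2:ℤ_[2]) := by norm_cast
    have hqn : ¬ ‖q‖ < 1 := by rw [PadicInt.norm_lt_one_iff_dvd, h2c]; exact hoddq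
    exact le_antisymm (PadicInt.norm_le_one q) (not_lt.1 hqn)
  -- backward inclusion
  have hback : {x : ℤ_[2] | (2 : ℤ_[2]) ^ l₀ ∣ x}
      ∪ {x : ℤ_[2] | (2 : ℤ_[2]) ^ l₀ ∣ x - 1} ⊆ Set.range ι := by
    have hcl : IsClosed (Set.range ι) := (isCompact_range hcont).isClosed
    intro x hx
    have happrox : ∀ k : ℕ, ∃ m : ℕ, (2:ℤ_[2])^(l₀+k) ∣ ι m - x := by
      intro k
      rcases hx with hx | hx
      · obtain ⟨m, hm⟩ := hL x hx k
        exact ⟨m, by rw [hval m]; exact hm⟩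
      · set w := hqunit.unit with hwdef
        have hwq : (w : ℤ_[2]) = q := hqunit.unit_spec
        set y := (↑w⁻¹ : ℤ_[2]) * (x - 1) with hy
        have hqy : q * y = x - 1 := by
          rw [hy, ← hwq, ← mul_assoc, w.mul_inv, one_mul]
        have hdy : (2:ℤ_[2])^l₀ ∣ y := Dvd.dvd.mul_left hx _
        obtain ⟨m, hm⟩ := hL y hdy k
        refine ⟨m + 1, ?_⟩
        rw [hval (m+1), geom_sum_succ]
        have heq : q * (∑ i ∈ Finset.range m, q^i) + 1 - x
            = q * ((∑ i ∈ Finset.range m, q^i) - y) := by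
          rw [mul_sub, hqy]; ring
        rw [heq]
        exact Dvd.dvd.mul_left hm q
    suffices hcls : x ∈ closure (Set.range ι) by rwa [hcl.closure_eq] at hcls
    rw [Metric.mem_closure_iff]
    intro ε hε
    obtain ⟨k, hk⟩ := exists_pow_lt_of_lt_one hε (by norm_num : (1/2:ℝ) < 1)
    obtain ⟨m, hm⟩ := happrox k
    refine ⟨ι m, ⟨(m:ℤ_[2]), rfl⟩, ?_⟩
    have hnorm := (iota_pow_dvd_iff_norm (l₀+k) _).1 hm
    rw [dist_comm, dist_eq_norm]
    calc ‖ι m - x‖ ≤ (2:ℝ)^(-((l₀+k : ℕ):ℤ)) := hnorm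
      _ = (1/2:ℝ)^(l₀+k) := by
          rw [zpow_neg, zpow_natCast, one_div, inv_pow]
      _ ≤ (1/2:ℝ)^k := by
          exact pow_le_pow_of_le_one (by norm_num) (by norm_num) (Nat.le_add_left k l₀)
      _ < ε := hk
  exact Set.Subset.antisymm hforward hback
end

section
/- Let p = 2, q ∈ 1 + 2ℤ_2 with q ≡ 3 (mod 4) and q ≠ −1, set l_0 = v_2(q+1). For z ∈ 2ℤ_2 with z ≠ 0, v_2(ι_q(z)) = v_2(z) + l_0 − 1. -/
open PadicInt

private lemma padic_val_mul {x y : ℤ_[2]} (hx : x ≠ 0) (hy : y ≠ 0) :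
    (x * y).valuation = x.valuation + y.valuation := by
  exact PadicInt.valuation_mul hx hy

private lemma padic_val_eq_of_norm_eq {x y : ℤ_[2]} (hx : x ≠ 0) (hy : y ≠ 0)
    (h : ‖x‖ = ‖y‖) : x.valuation = y.valuation := by
  rw [norm_eq_zpow_neg_valuation hx, norm_eq_zpow_neg_valuation hy] at h
  have h' : (2 : ℝ) ^ (-(x.valuation : ℤ)) = (2 : ℝ) ^ (-(y.valuation : ℤ)) := by exact_mod_cast h
  have := zpow_right_injective₀ (by norm_num : (0:ℝ) < 2) (by norm_num) h'
  omega

private lemma two_dvd_one_false : ¬ (2 : ℤ_[2]) ∣ 1 := by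
  intro h
  have : ‖(1 : ℤ_[2])‖ < 1 := by
    rw [PadicInt.norm_lt_one_iff_dvd]
    exact_mod_cast h
  simp at this

private lemma odd_not_dvd (c : ℤ_[2]) : ¬ (2 : ℤ_[2]) ∣ (2 * c + 1) := by
  rintro ⟨d, hd⟩
  exact two_dvd_one_false ⟨d - c, by linear_combination hd⟩

private lemma padic_val_odd {x : ℤ_[2]} (hx : ¬ (2 : ℤ_[2]) ∣ x) : x.valuation = 0 := by
  have hx0 : x ≠ 0 := by rintro rfl; exact hx (dvd_zero _)
  have h1 : ¬ ‖x‖ < 1 := by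
    rw [PadicInt.norm_lt_one_iff_dvd]
    intro h
    exact hx (by exact_mod_cast h)
  have h2 : ‖x‖ = 1 := le_antisymm x.norm_le_one (not_lt.mp h1)
  have := padic_val_eq_of_norm_eq hx0 one_ne_zero (by simpa using h2)
  simpa [PadicInt.valuation_one] using this

private lemma nat_even_of_dvd {n : ℕ} (h : (2 : ℤ_[2]) ∣ (n : ℤ_[2])) : 2 ∣ n := by
  have : ‖((n : ℤ) : ℤ_[2])‖ < 1 := by
    rw [PadicInt.norm_lt_one_iff_dvd]; exact_mod_cast h
  rw [PadicInt.norm_int_lt_one_iff_dvd] at this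
  exact_mod_cast this

private lemma padic_val_two : (2 : ℤ_[2]).valuation = 1 := by
  have : ((2:ℕ) : ℤ_[2]).valuation = 1 := PadicInt.valuation_p
  simpa using this

/-- LTE at 2 : if `4 ∣ u - 1`, `u ≠ 1`, `0 < m` then `u^m - 1 ≠ 0` and
`v(u^m - 1) = v(u-1) + v(m)`. -/
private lemma lte_two (u : ℤ_[2]) (hu4 : (4 : ℤ_[2]) ∣ u - 1) (hu1 : u - 1 ≠ 0) :
    ∀ m : ℕ, 0 < m → u ^ m - 1 ≠ 0 ∧
      (u ^ m - 1).valuation = (u - 1).valuation + ((m : ℤ_[2])).valuation := by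
  have h2ne : (2 : ℤ_[2]) ≠ 0 := by norm_num
  have hu2 : (2 : ℤ_[2]) ∣ u - 1 := dvd_trans ⟨2, by norm_num⟩ hu4
  intro m
  induction m using Nat.strong_induction_on with
  | _ m ih =>
    intro hm
    rcases Nat.even_or_odd m with he | ho
    · -- m = 2k
      obtain ⟨k, rfl⟩ := he
      have hk : 0 < k := by omega
      obtain ⟨hne, hvalk⟩ := ih k (by omega) hk
      have hfac : u ^ (k + k) - 1 = (u ^ k - 1) * (u ^ k + 1) := by ring
      have h4 : (4 : ℤ_[2]) ∣ u ^ k - 1 :=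
        dvd_trans hu4 (by simpa using sub_dvd_pow_sub_pow u 1 k)
      obtain ⟨c, hc⟩ := h4
      have hsum : u ^ k + 1 = 2 * (2 * c + 1) := by linear_combination hc
      have hoddne : (2 * c + 1 : ℤ_[2]) ≠ 0 := fun h => odd_not_dvd c (h ▸ dvd_zero _)
      have hplusne : u ^ k + 1 ≠ 0 := by rw [hsum]; exact mul_ne_zero h2ne hoddne
      have hvplus : (u ^ k + 1).valuation = 1 := by
        rw [hsum, padic_val_mul h2ne hoddne, padic_val_odd (odd_not_dvd c),
          padic_val_two]
      have hcast : ((k + k : ℕ) : ℤ_[2]) = 2 * (k : ℤ_[2]) := by push_cast; ring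
      have hkne : ((k : ℤ_[2])) ≠ 0 := Nat.cast_ne_zero.mpr hk.ne'
      have hvcast : (((k + k : ℕ) : ℤ_[2])).valuation = 1 + ((k : ℤ_[2])).valuation := by
        rw [hcast, padic_val_mul h2ne hkne, padic_val_two]
      constructor
      · rw [hfac]; exact mul_ne_zero hne hplusne
      · rw [hfac, padic_val_mul hne hplusne, hvalk, hvplus, hvcast]; ring
    · -- m odd
      have hgeom : (∑ i ∈ Finset.range m, u ^ i) * (u - 1) = u ^ m - 1 := geom_sum_mul u m
      set S := ∑ i ∈ Finset.range m, u ^ i with hS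
      have hSm : (2 : ℤ_[2]) ∣ S - (m : ℤ_[2]) := by
        have hSd : S - (m : ℤ_[2]) = ∑ i ∈ Finset.range m, (u ^ i - 1) := by
          rw [hS, Finset.sum_sub_distrib]; simp
        rw [hSd]
        exact Finset.dvd_sum fun i _ =>
          dvd_trans hu2 (by simpa using sub_dvd_pow_sub_pow u 1 i)
      have hSodd : ¬ (2 : ℤ_[2]) ∣ S := by
        intro hd
        have hdm : (2 : ℤ_[2]) ∣ (m : ℤ_[2]) := by
          have := dvd_sub hd hSm
          simpa using this
        have := nat_even_of_dvd hdm
        obtain ⟨k, hk⟩ := ho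
        omega
      have hSne : S ≠ 0 := fun h => hSodd (h ▸ dvd_zero _)
      have hmodd : ¬ (2 : ℤ_[2]) ∣ (m : ℤ_[2]) := by
        intro h
        have := nat_even_of_dvd h
        obtain ⟨k, hk⟩ := ho
        omega
      constructor
      · rw [← hgeom]; exact mul_ne_zero hSne hu1
      · rw [← hgeom, padic_val_mul hSne hu1, padic_val_odd hSodd,
          padic_val_odd hmodd]
        ring

/-- For `q ∈ ℤ_2` with `q ≡ 3 (mod 4)`, `q ≠ −1`, `l₀ = v_2(q+1)`, and
`z ∈ 2ℤ_2`, `z ≠ 0`: `v_2(ι_q(z)) = v_2(z) + l₀ − 1`. -/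
theorem iota_valuation_two (q : ℤ_[2]) (hq : (4 : ℤ_[2]) ∣ q - 3) (hqm : q ≠ -1)
    (l₀ : ℕ) (hl₀ : (q + 1).valuation = (l₀ : ℤ))
    (ι : ℤ_[2] → ℤ_[2]) (hcont : Continuous ι)
    (hval : ∀ n : ℕ, ι n = ∑ i ∈ Finset.range n, q ^ i)
    (z : ℤ_[2]) (hz2 : (2 : ℤ_[2]) ∣ z) (hz0 : z ≠ 0) :
    (ι z).valuation = z.valuation + (l₀ : ℤ) - 1 := by
  have h2ne : (2 : ℤ_[2]) ≠ 0 := by norm_num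
  obtain ⟨d, hd⟩ := hq
  have hq1 : q - 1 = 2 * (2 * d + 1) := by linear_combination hd
  have hoddne : (2 * d + 1 : ℤ_[2]) ≠ 0 := fun h => odd_not_dvd d (h ▸ dvd_zero _)
  have hq1ne : q - 1 ≠ 0 := by rw [hq1]; exact mul_ne_zero h2ne hoddne
  have hvq1 : (q - 1).valuation = 1 := by
    rw [hq1, padic_val_mul h2ne hoddne, padic_val_odd (odd_not_dvd d), padic_val_two]
  have hq1pne : q + 1 ≠ 0 := fun h => hqm (by linear_combination h)
  set u := q ^ 2 with hu
  have hufac : u - 1 = (q - 1) * (q + 1) := by rw [hu]; ring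
  have hune : u - 1 ≠ 0 := hufac ▸ mul_ne_zero hq1ne hq1pne
  have hvu : (u - 1).valuation = 1 + (l₀ : ℤ) := by
    rw [hufac, padic_val_mul hq1ne hq1pne, hvq1]; omega
  have hu4 : (4 : ℤ_[2]) ∣ u - 1 := by
    rw [hufac, hq1]
    exact ⟨2 * (2 * d + 1) * (d + 1), by linear_combination 2 * (2 * d + 1) * hd⟩
  have key : ∀ n : ℕ, 2 ∣ n → n ≠ 0 → ι n ≠ 0 ∧
      (ι n).valuation = ((n : ℤ_[2])).valuation + (l₀ : ℤ) - 1 := by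
    intro n hn2 hn0
    obtain ⟨m, rfl⟩ := hn2
    have hm : 0 < m := by omega
    obtain ⟨hne, hvalm⟩ := lte_two u hu4 hune m hm
    have hgeom : (∑ i ∈ Finset.range (2*m), q ^ i) * (q - 1) = q ^ (2*m) - 1 :=
      geom_sum_mul q (2*m)
    have hpow : q ^ (2 * m) - 1 = u ^ m - 1 := by rw [hu, ← pow_mul]
    have hiota : ι ((2*m : ℕ) : ℤ_[2]) * (q - 1) = u ^ m - 1 := by
      rw [hval (2*m), hgeom, hpow]
    have hiotane : ι ((2*m : ℕ) : ℤ_[2]) ≠ 0 := by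
      intro h
      apply hne
      rw [← hiota, h, zero_mul]
    have hmne : ((m : ℤ_[2])) ≠ 0 := Nat.cast_ne_zero.mpr hm.ne'
    have hncast : ((2 * m : ℕ) : ℤ_[2]) = 2 * (m : ℤ_[2]) := by push_cast; ring
    have hvn : (((2 * m : ℕ) : ℤ_[2])).valuation = 1 + ((m : ℤ_[2])).valuation := by
      rw [hncast, padic_val_mul h2ne hmne, padic_val_two]
    have hprod := padic_val_mul hiotane hq1ne
    rw [hiota, hvalm, hvq1] at hprod
    refine ⟨hiotane, ?_⟩
    rw [hvn]
    omega
  set ε : ℝ := (2 : ℝ) ^ (-(z.valuation + (l₀ : ℤ) - 1)) with hε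
  have hεpos : 0 < ε := by positivity
  obtain ⟨δ, hδpos, hδ⟩ := Metric.continuousAt_iff.mp hcont.continuousAt ε hεpos
  have hznorm : 0 < ‖z‖ := norm_pos_iff.mpr hz0
  obtain ⟨n, hn⟩ := PadicInt.denseRange_natCast.exists_dist_lt z (lt_min hδpos hznorm)
  rw [dist_eq_norm] at hn
  have hnz_lt : ‖z - (n : ℤ_[2])‖ < ‖z‖ := lt_of_lt_of_le hn (min_le_right _ _)
  have hnz_δ : ‖z - (n : ℤ_[2])‖ < δ := lt_of_lt_of_le hn (min_le_left _ _)
  have hnormeq : ‖(n : ℤ_[2])‖ = ‖z‖ := by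
    have h1 : ‖(n : ℤ_[2])‖ ≤ ‖z‖ := by
      calc ‖(n : ℤ_[2])‖ = ‖z + ((n : ℤ_[2]) - z)‖ := by ring_nf
        _ ≤ max ‖z‖ ‖(n : ℤ_[2]) - z‖ := PadicInt.nonarchimedean _ _
        _ ≤ ‖z‖ := max_le le_rfl (by rw [← norm_neg]; simpa [neg_sub] using hnz_lt.le)
    have h2 : ‖z‖ ≤ ‖(n : ℤ_[2])‖ := by
      by_contra hlt
      push_neg at hlt
      have hb : ‖z‖ ≤ max ‖(n : ℤ_[2])‖ ‖z - (n : ℤ_[2])‖ := by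
        calc ‖z‖ = ‖(n : ℤ_[2]) + (z - (n : ℤ_[2]))‖ := by ring_nf
          _ ≤ _ := PadicInt.nonarchimedean _ _
      rcases max_cases ‖(n : ℤ_[2])‖ ‖z - (n : ℤ_[2])‖ with ⟨h, _⟩ | ⟨h, _⟩ <;>
        rw [h] at hb <;> linarith
    linarith
  have hnne : (n : ℤ_[2]) ≠ 0 := by
    intro h; rw [h, norm_zero] at hnormeq; exact hznorm.ne hnormeq
  have hn0 : n ≠ 0 := fun h => hnne (by rw [h]; simp)
  have hvneq : ((n : ℤ_[2])).valuation = z.valuation :=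
    padic_val_eq_of_norm_eq hnne hz0 hnormeq
  have hneven : 2 ∣ n := by
    have hzlt : ‖z‖ < 1 := by
      rw [PadicInt.norm_lt_one_iff_dvd]; exact_mod_cast hz2
    have hnlt : ‖(n : ℤ_[2])‖ < 1 := by rw [hnormeq]; exact hzlt
    have hndvd : (2 : ℤ_[2]) ∣ (n : ℤ_[2]) := by
      have := (PadicInt.norm_lt_one_iff_dvd _).mp hnlt
      exact_mod_cast this
    exact nat_even_of_dvd hndvd
  obtain ⟨hιne, hιval⟩ := key n hneven hn0
  have hιnval : (ι n).valuation = z.valuation + (l₀ : ℤ) - 1 := by rw [hιval, hvneq]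
  have hιnorm : ‖ι (n : ℤ_[2])‖ = ε := by
    rw [norm_eq_zpow_neg_valuation hιne, hιnval, hε]; norm_num
  have hdist : ‖ι (n : ℤ_[2]) - ι z‖ < ε := by
    have h := hδ (show dist (n : ℤ_[2]) z < δ by
      rw [dist_eq_norm, ← norm_neg]; simpa [neg_sub] using hnz_δ)
    rwa [dist_eq_norm] at h
  have hιznorm : ‖ι z‖ = ε := by
    have h1 : ‖ι z‖ ≤ ε := by
      calc ‖ι z‖ = ‖ι (n:ℤ_[2]) + (ι z - ι (n:ℤ_[2]))‖ := by ring_nf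
        _ ≤ max ‖ι (n:ℤ_[2])‖ ‖ι z - ι (n:ℤ_[2])‖ := PadicInt.nonarchimedean _ _
        _ ≤ ε := max_le hιnorm.le (by rw [← norm_neg]; simpa [neg_sub] using hdist.le)
    have h2 : ε ≤ ‖ι z‖ := by
      by_contra hlt
      push_neg at hlt
      have hb : ‖ι (n:ℤ_[2])‖ ≤ max ‖ι z‖ ‖ι (n:ℤ_[2]) - ι z‖ := by
        calc ‖ι (n:ℤ_[2])‖ = ‖ι z + (ι (n:ℤ_[2]) - ι z)‖ := by ring_nf
          _ ≤ _ := PadicInt.nonarchimedean _ _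
      rw [hιnorm] at hb
      rcases max_cases ‖ι z‖ ‖ι (n:ℤ_[2]) - ι z‖ with ⟨h, _⟩ | ⟨h, _⟩ <;>
        rw [h] at hb <;> linarith
    linarith
  have hιzne : ι z ≠ 0 := by
    intro h; rw [h, norm_zero] at hιznorm; exact hεpos.ne' hιznorm.symm
  have hfin := padic_val_eq_of_norm_eq hιzne hιne (by rw [hιznorm, hιnorm])
  rw [hfin, hιnval]
end

section
/- Let p be an odd prime, q ∈ 1 + pℤ_p, and n ≥ 1. Then the map z mod p^n ↦ ι_q(z) mod p^n is a well-defined bijection of ℤ/p^nℤ; in particular ∑_{z=0}^{p^n−1} ι_q(z) ≡ 0 (mod p^n). -/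
open Finset

namespace IotaAux

variable {p : ℕ} [hf : Fact p.Prime]

noncomputable def S (q : ℤ_[p]) (m : ℕ) : ℤ_[p] := ∑ i ∈ Finset.range m, q ^ i

lemma S_add (q : ℤ_[p]) (a b : ℕ) : S q (a + b) = S q a + q ^ a * S q b := by
  simp [S, Finset.sum_range_add, pow_add, Finset.mul_sum]

lemma S_mul (q : ℤ_[p]) (a b : ℕ) : S q (a * b) = S q a * S (q ^ a) b := by
  induction b with
  | zero => simp [S]
  | succ b ih =>
    rw [Nat.mul_succ, S_add, ih]
    have h1 : S q a = S q a + q ^ a * S q 0 := by simp [S]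
    have : S (q ^ a) (b + 1) = S (q ^ a) b + (q ^ a) ^ b := by
      simp [S, Finset.sum_range_succ]
    rw [this, pow_mul]
    have : S q a = q ^ 0 * S q a := by simp
    simp [S, Finset.sum_range_succ]
    ring

lemma pow_eq (u : ℤ_[p]) (i : ℕ) : ∃ c, (1 + u) ^ i = 1 + i * u + u ^ 2 * c := by
  induction i with
  | zero => exact ⟨0, by simp⟩
  | succ i ih =>
    obtain ⟨c, hc⟩ := ih
    refine ⟨(i : ℤ_[p]) + c + u * c, ?_⟩
    rw [pow_succ, hc]
    push_cast
    ring

lemma isUnit_of (x : ℤ_[p]) (hx : (p : ℤ_[p]) ∣ x - 1) : IsUnit x := by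
  by_contra h
  rw [PadicInt.not_isUnit_iff, PadicInt.norm_lt_one_iff_dvd] at h
  have h1 : (p : ℤ_[p]) ∣ 1 := by
    have := dvd_sub h hx
    simpa using this
  have h2 := isUnit_of_dvd_one h1
  rw [PadicInt.isUnit_iff, PadicInt.norm_p] at h2
  have hp2 : (2 : ℝ) ≤ p := by exact_mod_cast hf.out.two_le
  have : (p : ℝ)⁻¹ < 1 := by
    rw [inv_lt_one_iff₀]
    right; linarith
  rw [h2] at this
  exact lt_irrefl 1 this

lemma dvd_nat_cast_iff (k m : ℕ) : (p : ℤ_[p]) ^ k ∣ (m : ℤ_[p]) ↔ p ^ k ∣ m := by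
  have h := PadicInt.pow_p_dvd_int_iff (p := p) k (m : ℤ)
  have h2 : ((m : ℤ) : ℤ_[p]) = (m : ℤ_[p]) := by push_cast; ring
  rw [h2] at h
  rw [h]
  exact_mod_cast Int.natCast_dvd_natCast

lemma S_p (hp : Odd p) (q : ℤ_[p]) (hq : (p : ℤ_[p]) ∣ q - 1) :
    (p : ℤ_[p]) ^ 2 ∣ S q p - p := by
  obtain ⟨t, ht⟩ := hq
  have hqe : q = 1 + (q - 1) := by ring
  choose c hc using fun i : ℕ => pow_eq (p := p) (q - 1) i
  have hS : S q p = ∑ i ∈ range p, (1 + (i : ℤ_[p]) * (q - 1) + (q - 1) ^ 2 * c i) := by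
    unfold S
    refine Finset.sum_congr rfl fun i _ => ?_
    conv_lhs => rw [hqe]
    exact hc i
  rw [hS, Finset.sum_add_distrib, Finset.sum_add_distrib]
  have hsum1 : ∑ _i ∈ range p, (1 : ℤ_[p]) = p := by simp
  have hsum2 : ∑ i ∈ range p, (i : ℤ_[p]) * (q - 1) = ((p * (p - 1) / 2 : ℕ) : ℤ_[p]) * (q - 1) := by
    rw [← Finset.sum_mul]
    congr 1
    rw [← Nat.cast_sum]
    congr 1
    exact Finset.sum_range_id p
  have hsum3 : ∑ i ∈ range p, (q - 1) ^ 2 * c i = (q - 1) ^ 2 * ∑ i ∈ range p, c i := by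
    rw [Finset.mul_sum]
  rw [hsum1, hsum2, hsum3]
  have hmid : (p : ℤ_[p]) ^ 2 ∣ ((p * (p - 1) / 2 : ℕ) : ℤ_[p]) * (q - 1) := by
    have hdvd : p ∣ p * (p - 1) / 2 := by
      have h2 : 2 ∣ p - 1 := by
        obtain ⟨j, hj⟩ := hp
        omega
      obtain ⟨j, hj⟩ := h2
      rw [hj, show p * (2 * j) = p * j * 2 by ring, Nat.mul_div_cancel _ (by norm_num)]
      exact Dvd.intro j rfl
    obtain ⟨j, hj⟩ := hdvd
    rw [hj, ht]
    push_cast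
    ring_nf
    exact ⟨(j : ℤ_[p]) * t, by ring⟩
  have hlast : (p : ℤ_[p]) ^ 2 ∣ (q - 1) ^ 2 * ∑ i ∈ range p, c i := by
    rw [ht]
    exact ⟨t ^ 2 * ∑ i ∈ range p, c i, by ring⟩
  convert dvd_add hmid hlast using 1
  ring

lemma key (hp : Odd p) : ∀ (n : ℕ) (q : ℤ_[p]), (p : ℤ_[p]) ∣ q - 1 → ∀ m : ℕ,
    ((p : ℤ_[p]) ^ n ∣ S q m ↔ (p : ℤ_[p]) ^ n ∣ (m : ℤ_[p])) := by
  intro n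
  induction n with
  | zero => simp
  | succ n ih =>
    intro q hq m
    have hp0 : (p : ℤ_[p]) ≠ 0 := Nat.cast_ne_zero.mpr hf.out.ne_zero
    have hq1 : (p : ℤ_[p]) ∣ S q m - m := by
      have hsub : S q m - m = ∑ i ∈ range m, (q ^ i - 1) := by
        rw [Finset.sum_sub_distrib]
        simp [S]
      rw [hsub]
      refine Finset.dvd_sum fun i _ => dvd_trans hq ?_
      simpa using sub_dvd_pow_sub_pow q 1 i
    have hqp : (p : ℤ_[p]) ∣ q ^ p - 1 := dvd_trans hq (by simpa using sub_dvd_pow_sub_pow q 1 p)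
    obtain ⟨d, hd⟩ := S_p hp q hq
    have hSp : S q p = p * (1 + p * d) := by linear_combination hd
    have hu : IsUnit (1 + (p : ℤ_[p]) * d) := isUnit_of _ ⟨d, by ring⟩
    constructor
    · intro h
      have h1 : (p : ℤ_[p]) ∣ (m : ℤ_[p]) := by
        have hps : (p : ℤ_[p]) ∣ S q m :=
          dvd_trans (dvd_pow_self _ (Nat.succ_ne_zero n)) h
        have := dvd_sub hps hq1
        simpa using this
      have hm : p ∣ m := by
        have := (dvd_nat_cast_iff 1 m).mp (by simpa using h1)
        simpa using this
      obtain ⟨a, rfl⟩ := hm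
      rw [S_mul, hSp] at h
      have h2 : (p : ℤ_[p]) ^ n ∣ (1 + p * d) * S (q ^ p) a := by
        rw [pow_succ'] at h
        exact (mul_dvd_mul_iff_left hp0).mp (by rwa [mul_assoc] at h)
      have h3 : (p : ℤ_[p]) ^ n ∣ S (q ^ p) a := by
        rwa [hu.dvd_mul_left] at h2
      have h4 := (ih (q ^ p) hqp a).mp h3
      push_cast
      rw [pow_succ']
      exact mul_dvd_mul (dvd_refl _) h4
    · intro h
      have hm : p ∣ m := by
        have h1 : (p : ℤ_[p]) ∣ (m : ℤ_[p]) :=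
          dvd_trans (dvd_pow_self _ (Nat.succ_ne_zero n)) h
        have := (dvd_nat_cast_iff 1 m).mp (by simpa using h1)
        simpa using this
      obtain ⟨a, rfl⟩ := hm
      have h4 : (p : ℤ_[p]) ^ n ∣ (a : ℤ_[p]) := by
        have h5 : (p : ℤ_[p]) * (p : ℤ_[p]) ^ n ∣ (p : ℤ_[p]) * a := by
          push_cast at h
          rwa [pow_succ'] at h
        exact (mul_dvd_mul_iff_left hp0).mp h5
      have h3 := (ih (q ^ p) hqp a).mpr h4
      rw [S_mul, hSp, pow_succ']
      have : (p : ℤ_[p]) * (1 + p * d) * S (q ^ p) a =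
          ((p : ℤ_[p]) * S (q ^ p) a) * (1 + p * d) := by ring
      rw [this]
      exact Dvd.dvd.mul_right (mul_dvd_mul (dvd_refl _) h3) _

lemma mod_eq_iff (n : ℕ) (x y : ℤ_[p]) :
    PadicInt.toZModPow n x = PadicInt.toZModPow n y ↔ (p : ℤ_[p]) ^ n ∣ x - y := by
  rw [← sub_eq_zero, ← map_sub, ← RingHom.mem_ker, PadicInt.ker_toZModPow,
    Ideal.mem_span_singleton]

end IotaAux

/-- For `p` odd, `q ∈ 1 + pℤ_p`, `n ≥ 1`: the map induced by `ι_q` on `ℤ/p^nℤ`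
is a well-defined bijection; in particular `∑_{z=0}^{p^n−1} ι_q(z) ≡ 0 (mod p^n)`. -/
theorem iota_mod_bijective (p : ℕ) [Fact p.Prime] (hp : Odd p)
    (q : ℤ_[p]) (hq : (p : ℤ_[p]) ∣ q - 1)
    (ι : ℤ_[p] → ℤ_[p]) (hcont : Continuous ι)
    (hval : ∀ n : ℕ, ι n = ∑ i ∈ Finset.range n, q ^ i)
    (n : ℕ) (hn : 1 ≤ n) :
    (∃ f : ZMod (p ^ n) → ZMod (p ^ n),
        Function.Bijective f ∧
        ∀ z : ℤ_[p], f (PadicInt.toZModPow n z) = PadicInt.toZModPow n (ι z)) ∧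
    (p : ℤ_[p]) ^ n ∣ ∑ z ∈ Finset.range (p ^ n), ι (z : ℤ_[p]) := by
  classical
  haveI : NeZero (p ^ n) := ⟨pow_ne_zero _ (Fact.out (p := p.Prime)).ne_zero⟩
  have hvalS : ∀ m : ℕ, ι m = IotaAux.S q m := hval
  -- congruence for naturals
  have congr_iff : ∀ a b : ℕ, b ≤ a →
      ((p : ℤ_[p]) ^ n ∣ ι a - ι b ↔ (p : ℤ_[p]) ^ n ∣ ((a : ℤ_[p]) - b)) := by
    intro a b hba
    obtain ⟨c, rfl⟩ := Nat.exists_eq_add_of_le hba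
    have h1 : ι ((b + c : ℕ) : ℤ_[p]) - ι (b : ℤ_[p]) = q ^ b * IotaAux.S q c := by
      rw [hvalS, hvalS, IotaAux.S_add]; ring
    have h2 : (((b + c : ℕ) : ℤ_[p]) - b) = (c : ℤ_[p]) := by push_cast; ring
    rw [h1, h2]
    have hqu : IsUnit (q ^ b) := (IotaAux.isUnit_of q hq).pow b
    rw [hqu.dvd_mul_left]
    exact IotaAux.key hp n q hq c
  have congr_all : ∀ a b : ℕ,
      ((p : ℤ_[p]) ^ n ∣ ι a - ι b ↔ (p : ℤ_[p]) ^ n ∣ ((a : ℤ_[p]) - b)) := by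
    intro a b
    rcases le_total b a with h | h
    · exact congr_iff a b h
    · rw [show ι (a : ℤ_[p]) - ι b = -(ι b - ι a) by ring,
        show ((a : ℤ_[p]) - b) = -((b : ℤ_[p]) - a) by ring, dvd_neg, dvd_neg]
      exact congr_iff b a h
  set f : ZMod (p ^ n) → ZMod (p ^ n) :=
    fun x => PadicInt.toZModPow n (ι ((x.val : ℕ) : ℤ_[p])) with hf_def
  -- compatibility
  have compat : ∀ z : ℤ_[p], f (PadicInt.toZModPow n z) = PadicInt.toZModPow n (ι z) := by
    intro z
    set a := z.appr n with ha_def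
    have hza : (p : ℤ_[p]) ^ n ∣ z - a :=
      Ideal.mem_span_singleton.mp (PadicInt.appr_spec n z)
    have h1 : PadicInt.toZModPow n z = ((a : ℕ) : ZMod (p ^ n)) := by
      rw [← map_natCast (PadicInt.toZModPow n) a, IotaAux.mod_eq_iff]
      exact hza
    have hval_a : (PadicInt.toZModPow n z).val = a := by
      rw [h1, ZMod.val_natCast, Nat.mod_eq_of_lt (PadicInt.appr_lt z n)]
    show PadicInt.toZModPow n (ι (((PadicInt.toZModPow n z).val : ℕ) : ℤ_[p]))
        = PadicInt.toZModPow n (ι z)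
    rw [hval_a, IotaAux.mod_eq_iff]
    -- continuity argument: p^n ∣ ι a - ι z
    have hlim : Filter.Tendsto (fun k => ((z.appr k : ℕ) : ℤ_[p])) Filter.atTop (nhds z) := by
      rw [tendsto_iff_norm_sub_tendsto_zero]
      have hbound : ∀ k : ℕ, ‖((z.appr k : ℕ) : ℤ_[p]) - z‖ ≤ ((p : ℝ)⁻¹) ^ k := by
        intro k
        rw [norm_sub_rev]
        have := (PadicInt.norm_le_pow_iff_mem_span_pow (z - (z.appr k : ℤ_[p])) k).mpr
          (PadicInt.appr_spec k z)
        calc ‖z - (z.appr k : ℤ_[p])‖ ≤ (p : ℝ) ^ (-(k : ℤ)) := this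
          _ = ((p : ℝ)⁻¹) ^ k := by
            rw [zpow_neg, inv_pow, zpow_natCast]
      have hppos : (0 : ℝ) ≤ (p : ℝ)⁻¹ := by positivity
      have hplt : (p : ℝ)⁻¹ < 1 := by
        rw [inv_lt_one_iff₀]
        right
        exact_mod_cast (Fact.out (p := p.Prime)).one_lt
      exact squeeze_zero (fun k => norm_nonneg _) hbound
        (tendsto_pow_atTop_nhds_zero_of_lt_one hppos hplt)
    have hι : Filter.Tendsto (fun k => ι ((z.appr k : ℕ) : ℤ_[p])) Filter.atTop (nhds (ι z)) :=
      (hcont.tendsto z).comp hlim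
    have heps : (0 : ℝ) < (p : ℝ) ^ (-(n : ℤ)) := by
      apply zpow_pos
      exact_mod_cast (Fact.out (p := p.Prime)).pos
    have hev : ∀ᶠ k in Filter.atTop,
        ‖ι ((z.appr k : ℕ) : ℤ_[p]) - ι z‖ ≤ (p : ℝ) ^ (-(n : ℤ)) := by
      have := Metric.tendsto_atTop.mp hι ((p : ℝ) ^ (-(n : ℤ))) heps
      obtain ⟨K, hK⟩ := this
      refine Filter.eventually_atTop.mpr ⟨K, fun k hk => ?_⟩
      have := hK k hk
      rw [dist_eq_norm] at this
      exact le_of_lt this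
    obtain ⟨k, hk1, hk2⟩ := (hev.and (Filter.eventually_ge_atTop n)).exists
    have h5 : (p : ℤ_[p]) ^ n ∣ ι ((z.appr k : ℕ) : ℤ_[p]) - ι z :=
      Ideal.mem_span_singleton.mp
        ((PadicInt.norm_le_pow_iff_mem_span_pow _ n).mp hk1)
    have h6 : (p : ℤ_[p]) ^ n ∣ ι ((a : ℕ) : ℤ_[p]) - ι ((z.appr k : ℕ) : ℤ_[p]) := by
      rw [congr_all]
      have hzk : (p : ℤ_[p]) ^ n ∣ z - (z.appr k : ℤ_[p]) :=
        dvd_trans (pow_dvd_pow _ hk2)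
          (Ideal.mem_span_singleton.mp (PadicInt.appr_spec k z))
      have heq : ((a : ℤ_[p]) - (z.appr k : ℤ_[p])) = (z - (z.appr k : ℤ_[p])) - (z - a) := by ring
      rw [heq]
      exact dvd_sub hzk hza
    have := dvd_add h6 h5
    simpa using this
  -- injectivity
  have hinj : Function.Injective f := by
    intro x y hxy
    have h1 : (p : ℤ_[p]) ^ n ∣ ι ((x.val : ℕ) : ℤ_[p]) - ι ((y.val : ℕ) : ℤ_[p]) :=
      (IotaAux.mod_eq_iff n _ _).mp hxy
    rw [congr_all] at h1
    have h2 : ((x.val : ℤ_[p]) - (y.val : ℤ_[p])) = (((x.val : ℤ) - (y.val : ℤ) : ℤ) : ℤ_[p]) := by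
      push_cast; ring
    rw [h2] at h1
    rw [PadicInt.pow_p_dvd_int_iff] at h1
    have h3 : ((x.val : ℕ) : ZMod (p ^ n)) = ((y.val : ℕ) : ZMod (p ^ n)) := by
      rw [ZMod.natCast_eq_natCast_iff]
      rw [Nat.modEq_iff_dvd]
      have : ((p : ℤ) ^ n) ∣ (y.val : ℤ) - x.val := by
        have := dvd_neg.mpr h1
        rw [neg_sub] at this
        exact_mod_cast this
      exact_mod_cast this
    rwa [ZMod.natCast_zmod_val, ZMod.natCast_zmod_val] at h3
  have hbij : Function.Bijective f := Finite.injective_iff_bijective.mp hinj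
  refine ⟨⟨f, hbij, compat⟩, ?_⟩
  -- sum part
  have hsum0 : (∑ x : ZMod (p ^ n), x) = 0 := by
    have h2 : (2 : ZMod (p ^ n)) * ∑ x : ZMod (p ^ n), x = 0 := by
      have hneg : (∑ x : ZMod (p ^ n), x) = ∑ x : ZMod (p ^ n), -x :=
        Fintype.sum_bijective (fun x : ZMod (p ^ n) => -x) neg_involutive.bijective
          (fun x => x) (fun x => -x) (fun x => (neg_neg x).symm)
      rw [two_mul]
      nth_rewrite 2 [hneg]
      rw [← Finset.sum_add_distrib]
      simp
    have hu2 : IsUnit (2 : ZMod (p ^ n)) := by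
      rw [show ((2 : ZMod (p ^ n))) = ((2 : ℕ) : ZMod (p ^ n)) by norm_cast,
        ZMod.isUnit_iff_coprime]
      exact (Nat.coprime_two_left.mpr hp).pow_right n
    exact (hu2.mul_right_eq_zero).mp h2
  have hmap : PadicInt.toZModPow n (∑ z ∈ Finset.range (p ^ n), ι (z : ℤ_[p])) = 0 := by
    rw [map_sum]
    have hterm : ∀ z ∈ Finset.range (p ^ n),
        PadicInt.toZModPow n (ι (z : ℤ_[p])) = f ((z : ZMod (p ^ n))) := by
      intro z _
      rw [← compat ((z : ℕ) : ℤ_[p]), map_natCast]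
    rw [Finset.sum_congr rfl hterm]
    have hre : (∑ z ∈ Finset.range (p ^ n), f ((z : ZMod (p ^ n))))
        = ∑ x : ZMod (p ^ n), f x := by
      apply Finset.sum_nbij' (i := fun z => ((z : ℕ) : ZMod (p ^ n)))
        (j := fun x => x.val)
      · intro a _; exact Finset.mem_univ _
      · intro x _; exact Finset.mem_range.mpr (ZMod.val_lt x)
      · intro a ha
        rw [ZMod.val_natCast, Nat.mod_eq_of_lt (Finset.mem_range.mp ha)]
      · intro x _; exact ZMod.natCast_zmod_val x
      · intro a _; rfl
    rw [hre]
    have hcomp : (∑ x : ZMod (p ^ n), f x) = ∑ x : ZMod (p ^ n), x :=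
      Fintype.sum_bijective f hbij (fun x => f x) (fun x => x) (fun x => rfl)
    rw [hcomp, hsum0]
  have h0 : (0 : ZMod (p ^ n)) = PadicInt.toZModPow n 0 := by simp
  rw [h0] at hmap
  have := (IotaAux.mod_eq_iff n _ _).mp hmap
  simpa using this
end

section
/- Let q ∈ 1 + 4ℤ_2 and n ≥ 1. Then ∑_{z=0}^{2^n − 1} ι_q(z) ≡ 2^{n−1} (mod 2^n). -/
private lemma geom_add (q : ℤ_[2]) (m z : ℕ) :
    ∑ i ∈ Finset.range (m + z), q ^ i
      = (∑ i ∈ Finset.range m, q ^ i) + q ^ m * ∑ i ∈ Finset.range z, q ^ i := by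
  rw [Finset.sum_range_add, Finset.mul_sum]
  simp [pow_add]

private lemma two_pow_dvd (q : ℤ_[2]) (hq : (4 : ℤ_[2]) ∣ q - 1) (n : ℕ) :
    (2 : ℤ_[2]) ^ (n + 2) ∣ q ^ (2 ^ n) - 1 := by
  induction n with
  | zero =>
    have : (2 : ℤ_[2]) ^ (0 + 2) = 4 := by norm_num
    simpa [this] using hq
  | succ n ih =>
    have h2 : (2 : ℤ_[2]) ∣ q ^ (2 ^ n) + 1 := by
      obtain ⟨c, hc⟩ := ih
      exact ⟨2 ^ (n + 1) * c + 1, by linear_combination hc⟩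
    have hfac : q ^ (2 ^ (n + 1)) - 1 = (q ^ (2 ^ n) - 1) * (q ^ (2 ^ n) + 1) := by
      rw [pow_succ, pow_mul]; ring
    rw [hfac]
    calc (2 : ℤ_[2]) ^ (n + 1 + 2) = 2 ^ (n + 2) * 2 := by rw [pow_succ]
    _ ∣ (q ^ (2 ^ n) - 1) * (q ^ (2 ^ n) + 1) := mul_dvd_mul ih h2

/-- For `q ∈ 1 + 4ℤ_2` and `n ≥ 1`: `∑_{z=0}^{2^n−1} ι_q(z) ≡ 2^{n−1} (mod 2^n)`,
where `ι_q(z) = 1 + q + ⋯ + q^{z−1}`. -/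
theorem iota_sum_mod_one (q : ℤ_[2]) (hq : (4 : ℤ_[2]) ∣ q - 1) (n : ℕ) (hn : 1 ≤ n) :
    (2 : ℤ_[2]) ^ n ∣
      (∑ z ∈ Finset.range (2 ^ n), ∑ i ∈ Finset.range z, q ^ i) - 2 ^ (n - 1) := by
  induction n, hn using Nat.le_induction with
  | base => norm_num [Finset.sum_range_succ]
  | succ n hn ih =>
    set S := ∑ z ∈ Finset.range (2 ^ n), ∑ i ∈ Finset.range z, q ^ i with hS
    set T := ∑ i ∈ Finset.range (2 ^ n), q ^ i with hT
    have hsplit : ∑ z ∈ Finset.range (2 ^ (n + 1)), ∑ i ∈ Finset.range z, q ^ i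
        = S + ((2 : ℤ_[2]) ^ n * T + q ^ (2 ^ n) * S) := by
      rw [pow_succ, mul_two, Finset.sum_range_add]
      congr 1
      calc ∑ z ∈ Finset.range (2 ^ n), ∑ i ∈ Finset.range (2 ^ n + z), q ^ i
          = ∑ z ∈ Finset.range (2 ^ n), (T + q ^ (2 ^ n) * ∑ i ∈ Finset.range z, q ^ i) :=
            Finset.sum_congr rfl fun z _ => geom_add q _ z
        _ = _ := by
            rw [Finset.sum_add_distrib, Finset.sum_const, ← Finset.mul_sum,
              Finset.card_range, nsmul_eq_mul]
            push_cast
            rfl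
    have key : (∑ z ∈ Finset.range (2 ^ (n + 1)), ∑ i ∈ Finset.range z, q ^ i) - 2 ^ (n + 1 - 1)
        = 2 * (S - 2 ^ (n - 1)) + (q ^ (2 ^ n) - 1) * S + 2 ^ n * T := by
      rw [hsplit]
      have h1 : n + 1 - 1 = n := rfl
      have h2 : (2 : ℤ_[2]) ^ n = 2 * 2 ^ (n - 1) := by
        rw [← pow_succ']
        congr 1
        omega
      rw [h1]
      linear_combination (-1 : ℤ_[2]) * h2
    rw [key]
    refine dvd_add (dvd_add ?_ ?_) ?_
    · rw [pow_succ']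
      exact mul_dvd_mul_left 2 ih
    · exact dvd_mul_of_dvd_left ((pow_dvd_pow _ (by omega)).trans (two_pow_dvd q hq n)) S
    · have hT2 : (2 : ℤ_[2]) ∣ T := by
        have hTdecomp : T = (∑ i ∈ Finset.range (2 ^ n), (q ^ i - 1)) + 2 ^ n := by
          rw [Finset.sum_sub_distrib, Finset.sum_const, Finset.card_range, nsmul_eq_mul]
          push_cast
          ring
        rw [hTdecomp]
        refine dvd_add (Finset.dvd_sum fun i _ => ?_) (dvd_pow_self 2 (by omega))
        have h24 : (2 : ℤ_[2]) ∣ 4 := ⟨2, by norm_num⟩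
        have : (q - 1) ∣ q ^ i - 1 := by
          simpa using sub_dvd_pow_sub_pow q 1 i
        exact (h24.trans hq).trans this
      obtain ⟨c, hc⟩ := hT2
      exact ⟨c, by rw [hc, pow_succ]; ring⟩
end

section
/- Let q ∈ 3 + 4ℤ_2, q ≠ −1, and n ≥ 1. Then ∑_{z=0}^{2^n − 1} ι_q(z) ≡ 2^{n−1} (mod 2^n). -/
/-- For `q ∈ 3 + 4ℤ_2`, `q ≠ −1`, and `n ≥ 1`:
`∑_{z=0}^{2^n−1} ι_q(z) ≡ 2^{n−1} (mod 2^n)`, where `ι_q(z) = 1 + q + ⋯ + q^{z−1}`. -/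
theorem iota_sum_mod_three (q : ℤ_[2]) (hq : (4 : ℤ_[2]) ∣ q - 3) (hqm : q ≠ -1)
    (n : ℕ) (hn : 1 ≤ n) :
    (2 : ℤ_[2]) ^ n ∣
      (∑ z ∈ Finset.range (2 ^ n), ∑ i ∈ Finset.range z, q ^ i) - 2 ^ (n - 1) := by
  have h2q1 : (2 : ℤ_[2]) ∣ q - 1 := by
    obtain ⟨a, ha⟩ := hq
    exact ⟨2 * a + 1, by linear_combination ha⟩
  have lemA : ∀ k : ℕ, (2 : ℤ_[2]) ^ (k + 1) ∣ q ^ (2 ^ k) - 1 := by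
    intro k
    induction k with
    | zero => simpa using h2q1
    | succ k ih =>
        have h2 : (2 : ℤ_[2]) ∣ q ^ (2 ^ k) + 1 := by
          have hd : (2 : ℤ_[2]) ∣ q ^ (2 ^ k) - 1 :=
            dvd_trans (dvd_pow_self 2 (Nat.succ_ne_zero k)) ih
          obtain ⟨c, hc⟩ := hd
          exact ⟨c + 1, by linear_combination hc⟩
        have key : q ^ (2 ^ (k + 1)) - 1 = (q ^ (2 ^ k) - 1) * (q ^ (2 ^ k) + 1) := by
          rw [pow_succ, pow_mul]; ring
        rw [key, pow_succ]
        exact mul_dvd_mul ih h2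
  induction n, hn using Nat.le_induction with
  | base => norm_num [Finset.sum_range_succ]
  | succ n hn IH =>
      have hq1pow : ∀ i : ℕ, (2 : ℤ_[2]) ∣ q ^ i - 1 := fun i =>
        dvd_trans h2q1 (by simpa using sub_dvd_pow_sub_pow q 1 i)
      have hiota : (2 : ℤ_[2]) ∣ ∑ i ∈ Finset.range (2 ^ n), q ^ i := by
        have h1 : (2 : ℤ_[2]) ∣ ∑ i ∈ Finset.range (2 ^ n), (q ^ i - 1) :=
          Finset.dvd_sum fun i _ => hq1pow i
        have hsum : ∑ i ∈ Finset.range (2 ^ n), (q ^ i - 1)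
            = (∑ i ∈ Finset.range (2 ^ n), q ^ i) - 2 ^ n := by
          rw [Finset.sum_sub_distrib, Finset.sum_const, Finset.card_range, nsmul_eq_mul,
            mul_one]
          push_cast
          ring
        have h2n : (2 : ℤ_[2]) ∣ (2 : ℤ_[2]) ^ n :=
          dvd_pow_self 2 (Nat.one_le_iff_ne_zero.mp hn)
        have := dvd_add h1 h2n
        rw [hsum] at this
        simpa using this
      have hsplit : ∀ z : ℕ, ∑ i ∈ Finset.range (2 ^ n + z), q ^ i
          = (∑ i ∈ Finset.range (2 ^ n), q ^ i)
            + q ^ (2 ^ n) * ∑ i ∈ Finset.range z, q ^ i := by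
        intro z
        rw [Finset.sum_range_add, Finset.mul_sum]
        simp [pow_add]
      have key : ∑ z ∈ Finset.range (2 ^ (n + 1)), ∑ i ∈ Finset.range z, q ^ i
          = (1 + q ^ (2 ^ n)) * (∑ z ∈ Finset.range (2 ^ n), ∑ i ∈ Finset.range z, q ^ i)
            + 2 ^ n * ∑ i ∈ Finset.range (2 ^ n), q ^ i := by
        rw [show (2 : ℕ) ^ (n + 1) = 2 ^ n + 2 ^ n by ring, Finset.sum_range_add]
        simp only [hsplit]
        rw [Finset.sum_add_distrib, Finset.sum_const, Finset.card_range, ← Finset.mul_sum,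
          nsmul_eq_mul]
        push_cast
        ring
      set S := ∑ z ∈ Finset.range (2 ^ n), ∑ i ∈ Finset.range z, q ^ i with hS
      set I := ∑ i ∈ Finset.range (2 ^ n), q ^ i with hI
      have hpow : (2 : ℤ_[2]) * 2 ^ (n - 1) = 2 ^ n := by
        conv_rhs => rw [show n = (n - 1) + 1 from (Nat.succ_pred_eq_of_pos hn).symm]
        rw [pow_succ]; ring
      have e : (1 + q ^ (2 ^ n)) * S + 2 ^ n * I - 2 ^ ((n + 1) - 1)
          = 2 * (S - 2 ^ (n - 1)) + (q ^ (2 ^ n) - 1) * S + 2 ^ n * I := by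
        simp only [Nat.add_sub_cancel]
        rw [← hpow]
        ring
      rw [key, e]
      apply dvd_add
      apply dvd_add
      · obtain ⟨a, ha⟩ := IH
        exact ⟨a, by rw [ha, pow_succ]; ring⟩
      · exact dvd_mul_of_dvd_left (lemA n) S
      · rw [pow_succ]
        exact mul_dvd_mul dvd_rfl hiota
end

section
/- Let p be a prime, q ∈ 1 + pℤ_p, n ≥ 1, and z ∈ ℤ_p. If v_p(z(z−1)) ≥ n − v_p(q − 1) + v_p(2), then ι_q(z) ≡ z (mod p^n). -/
open Finset

private lemma sum_geom_eq_choose {R : Type*} [CommRing R] (d : R) (k : ℕ) :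
    ∑ i ∈ Finset.range k, (1 + d) ^ i
      = ∑ j ∈ Finset.range k, (k.choose (j + 1) : R) * d ^ j := by
  induction k with
  | zero => simp
  | succ k ih =>
    rw [Finset.sum_range_succ, ih]
    have h1 : (∑ j ∈ Finset.range (k + 1), (k.choose j : R) * d ^ j) = (1 + d) ^ k := by
      rw [add_comm (1 : R) d, add_pow]
      apply Finset.sum_congr rfl
      intro j hj
      ring
    have h2 : (∑ j ∈ Finset.range (k + 1), (k.choose (j + 1) : R) * d ^ j)
        = ∑ j ∈ Finset.range k, (k.choose (j + 1) : R) * d ^ j := by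
      rw [Finset.sum_range_succ, Nat.choose_succ_self]
      simp
    symm
    calc ∑ j ∈ Finset.range (k + 1), ((k + 1).choose (j + 1) : R) * d ^ j
        = ∑ j ∈ Finset.range (k + 1),
            ((k.choose j : R) * d ^ j + (k.choose (j + 1) : R) * d ^ j) := by
          apply Finset.sum_congr rfl
          intro j hj
          rw [Nat.choose_succ_succ]
          push_cast
          ring
      _ = (∑ j ∈ Finset.range (k + 1), (k.choose j : R) * d ^ j)
            + ∑ j ∈ Finset.range (k + 1), (k.choose (j + 1) : R) * d ^ j :=
          Finset.sum_add_distrib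
      _ = (∑ j ∈ Finset.range k, (k.choose (j + 1) : R) * d ^ j) + (1 + d) ^ k := by
          rw [h1, h2]; ring

private lemma descFactorial_dvd_of_le (k : ℕ) {a b : ℕ} (h : a ≤ b) :
    k.descFactorial a ∣ k.descFactorial b := by
  induction b with
  | zero => simp_all
  | succ b ih =>
    rcases Nat.eq_or_lt_of_le h with rfl | h'
    · exact dvd_rfl
    · rw [Nat.descFactorial_succ]
      exact (ih (Nat.lt_succ_iff.mp h')).mul_left _

private lemma padicValNat_factorial_le' {p : ℕ} [hp : Fact p.Prime] {j : ℕ} (hj : 1 ≤ j) :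
    padicValNat p (Nat.factorial (j + 1)) ≤ j - 1 + (if p = 2 then 1 else 0) := by
  have hleg := sub_one_mul_padicValNat_factorial (p := p) (j + 1)
  have hs : 1 ≤ (p.digits (j + 1)).sum := by
    have hne : p.digits (j + 1) ≠ [] := Nat.digits_ne_nil_iff_ne_zero.mpr (Nat.succ_ne_zero j)
    have hmem := List.getLast_mem hne
    have hlast := Nat.getLast_digit_ne_zero p (Nat.succ_ne_zero j)
    calc 1 ≤ (p.digits (j + 1)).getLast hne := Nat.one_le_iff_ne_zero.mpr hlast
      _ ≤ (p.digits (j + 1)).sum := List.single_le_sum (fun _ _ => Nat.zero_le _) _ hmem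
  have h2 := hp.out.two_le
  by_cases hp2 : p = 2
  · subst hp2
    have hif : (if (2:ℕ) = 2 then 1 else 0) = 1 := by norm_num
    rw [hif]
    omega
  · have h3 : 3 ≤ p := by
      rcases Nat.lt_or_ge p 3 with h | h
      · interval_cases p <;> simp_all
      · exact h
    simp only [if_neg hp2]
    have h2v : 2 * padicValNat p (Nat.factorial (j + 1)) ≤ j + 1 - (p.digits (j + 1)).sum := by
      rw [← hleg]
      exact mul_le_mul_left (by omega) _
    omega

private lemma key_nat (p : ℕ) [hp : Fact p.Prime] (q : ℤ_[p]) (hq : (p : ℤ_[p]) ∣ q - 1)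
    (n : ℕ) (m₀ : ℕ) (hm₀ : (p : ℤ_[p]) ^ m₀ ∣ q - 1) (k : ℕ)
    (hk : p ^ (n - m₀ + if p = 2 then 1 else 0) ∣ k * (k - 1)) :
    (p : ℤ_[p]) ^ n ∣ (∑ i ∈ Finset.range k, q ^ i) - k := by
  set e := (if p = 2 then 1 else 0) with he
  set A := n - m₀ + e with hA
  set d := q - 1 with hd
  have hq1 : q = 1 + d := by rw [hd]; ring
  rw [hq1, sum_geom_eq_choose]
  rcases Nat.lt_or_ge k 2 with hk2 | hk2
  · interval_cases k <;> simp
  · have hk0 : 0 < k := by omega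
    rw [Finset.range_eq_Ico, Finset.sum_eq_sum_Ico_succ_bot hk0]
    simp only [zero_add, Nat.choose_one_right, pow_zero, mul_one]
    have hsplit : ((k : ℤ_[p]) + ∑ j ∈ Finset.Ico 1 k, (k.choose (j + 1) : ℤ_[p]) * d ^ j) - k
        = ∑ j ∈ Finset.Ico 1 k, (k.choose (j + 1) : ℤ_[p]) * d ^ j := by ring
    rw [hsplit]
    apply Finset.dvd_sum
    intro j hj
    obtain ⟨hj1, hjk⟩ := Finset.mem_Ico.mp hj
    have hj1k : j + 1 ≤ k := hjk
    have hCpos : 0 < k.choose (j + 1) := Nat.choose_pos hj1k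
    set v := padicValNat p (Nat.factorial (j + 1)) with hv
    set C := k.choose (j + 1) with hC
    -- p ^ A divides (j+1)! * C in ℕ
    have hdesc2 : k.descFactorial 2 = k * (k - 1) := by
      simp [Nat.descFactorial_succ, Nat.descFactorial]
      ring
    have hdvd1 : p ^ A ∣ Nat.factorial (j + 1) * C := by
      calc p ^ A ∣ k * (k - 1) := hk
        _ = k.descFactorial 2 := hdesc2.symm
        _ ∣ k.descFactorial (j + 1) := descFactorial_dvd_of_le k (by omega)
        _ = Nat.factorial (j + 1) * C := Nat.descFactorial_eq_factorial_mul_choose k (j + 1)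
    have hfac : A ≤ v + padicValNat p C := by
      have hne : Nat.factorial (j + 1) * C ≠ 0 :=
        mul_ne_zero (Nat.factorial_ne_zero _) hCpos.ne'
      have h := (Nat.Prime.pow_dvd_iff_le_factorization hp.out hne).mp hdvd1
      rwa [Nat.factorization_mul (Nat.factorial_ne_zero _) hCpos.ne', Finsupp.add_apply,
        Nat.factorization_def _ hp.out, Nat.factorization_def _ hp.out] at h
    have hBC : (p : ℤ_[p]) ^ (A - v) ∣ (C : ℤ_[p]) := by
      have hnat : p ^ (A - v) ∣ C :=
        dvd_trans (pow_dvd_pow p (by omega)) (pow_padicValNat_dvd (p := p) (n := C))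
      have := Nat.cast_dvd_cast (α := ℤ_[p]) hnat
      rwa [Nat.cast_pow] at this
    have hdj : (p : ℤ_[p]) ^ (m₀ + (j - 1)) ∣ d ^ j := by
      have hdecomp : d ^ j = d * d ^ (j - 1) := by
        rw [← pow_succ']
        congr 1
        omega
      rw [hdecomp, pow_add]
      exact mul_dvd_mul hm₀ (pow_dvd_pow_of_dvd hq _)
    have hmain : (p : ℤ_[p]) ^ ((A - v) + (m₀ + (j - 1))) ∣ (C : ℤ_[p]) * d ^ j := by
      rw [pow_add]
      exact mul_dvd_mul hBC hdj
    refine dvd_trans (pow_dvd_pow _ ?_) hmain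
    have hvle : v ≤ j - 1 + e := padicValNat_factorial_le' hj1
    omega

/-- Modular fixed point pairs: for `q ∈ 1 + pℤ_p`, `n ≥ 1`, if
`v_p(z(z−1)) ≥ n − v_p(q−1) + v_p(2)` then `ι_q(z) ≡ z (mod p^n)`.
(The valuation condition is expressed via divisibility, with `m₀ ≤ v_p(q−1)`.) -/
theorem modular_fixed_point_pairs (p : ℕ) [Fact p.Prime]
    (q : ℤ_[p]) (hq : (p : ℤ_[p]) ∣ q - 1)
    (ι : ℤ_[p] → ℤ_[p]) (hcont : Continuous ι)
    (hval : ∀ k : ℕ, ι k = ∑ i ∈ Finset.range k, q ^ i)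
    (n : ℕ) (hn : 1 ≤ n) (m₀ : ℕ) (hm₀ : (p : ℤ_[p]) ^ m₀ ∣ q - 1)
    (z : ℤ_[p])
    (hz : (p : ℤ_[p]) ^ (n - m₀ + if p = 2 then 1 else 0) ∣ z * (z - 1)) :
    (p : ℤ_[p]) ^ n ∣ ι z - z := by
  classical
  set A := n - m₀ + (if p = 2 then 1 else 0) with hA
  have hppos : (0 : ℝ) < p := by exact_mod_cast (Fact.out : p.Prime).pos
  obtain ⟨δ, hδpos, hball⟩ := Metric.continuous_iff.mp hcont z ((p : ℝ) ^ (-(n : ℤ)))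
    (zpow_pos hppos _)
  obtain ⟨N₀, hN₀⟩ := PadicInt.exists_pow_neg_lt p hδpos
  set N := max N₀ (max n A) with hN
  set k := z.appr N with hk
  have hzk : (p : ℤ_[p]) ^ N ∣ z - k := by
    have h := PadicInt.appr_spec N z
    rwa [Ideal.mem_span_singleton] at h
  have hnorm : ‖(k : ℤ_[p]) - z‖ ≤ (p : ℝ) ^ (-(N : ℤ)) := by
    rw [← norm_neg, neg_sub, PadicInt.norm_le_pow_iff_mem_span_pow, Ideal.mem_span_singleton]
    exact hzk
  have hdist : dist (k : ℤ_[p]) z < δ := by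
    rw [dist_eq_norm]
    refine lt_of_le_of_lt (hnorm.trans ?_) hN₀
    apply zpow_le_zpow_right₀
    · exact_mod_cast (Fact.out : p.Prime).one_le
    · simp only [neg_le_neg_iff, Int.ofNat_le]
      exact le_max_left _ _
  have h1 : (p : ℤ_[p]) ^ n ∣ ι z - ι k := by
    have hd := hball _ hdist
    rw [dist_eq_norm] at hd
    have hle : ‖ι (k : ℤ_[p]) - ι z‖ ≤ (p : ℝ) ^ (-(n : ℤ)) := le_of_lt hd
    rw [PadicInt.norm_le_pow_iff_mem_span_pow, Ideal.mem_span_singleton] at hle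
    rw [← neg_sub (ι (k : ℤ_[p])) (ι z)]
    exact dvd_neg.mpr hle
  have hA_dvd_nat : p ^ A ∣ k * (k - 1) := by
    have hNA : A ≤ N := le_trans (le_max_right n A) (le_max_right N₀ _)
    have hzk' : (p : ℤ_[p]) ^ A ∣ z - k := dvd_trans (pow_dvd_pow _ hNA) hzk
    have hkk : (k : ℤ_[p]) * ((k : ℤ_[p]) - 1) = z * (z - 1) - (z - k) * (z + k - 1) := by ring
    have hdvdZp : (p : ℤ_[p]) ^ A ∣ (k : ℤ_[p]) * ((k : ℤ_[p]) - 1) := by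
      rw [hkk]
      exact dvd_sub hz (hzk'.mul_right _)
    rcases Nat.eq_zero_or_pos k with hk0 | hk1
    · rw [hk0]; simp
    · have hcast : ((k * (k - 1) : ℕ) : ℤ_[p]) = (k : ℤ_[p]) * ((k : ℤ_[p]) - 1) := by
        rw [Nat.cast_mul, Nat.cast_sub hk1, Nat.cast_one]
      have hdvd2 : (p : ℤ_[p]) ^ A ∣ (((k * (k - 1) : ℕ) : ℤ) : ℤ_[p]) := by
        rw [Int.cast_natCast, hcast]
        exact hdvdZp
      rw [PadicInt.pow_p_dvd_int_iff] at hdvd2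
      exact_mod_cast hdvd2
  have h2 : (p : ℤ_[p]) ^ n ∣ ι k - k := by
    rw [hval k]
    exact key_nat p q hq n m₀ hm₀ k hA_dvd_nat
  have h3 : (p : ℤ_[p]) ^ n ∣ (k : ℤ_[p]) - z := by
    have hNn : n ≤ N := le_trans (le_max_left n A) (le_max_right N₀ _)
    rw [← neg_sub z (k : ℤ_[p])]
    exact dvd_neg.mpr (dvd_trans (pow_dvd_pow _ hNn) hzk)
  have hsum : ι z - z = (ι z - ι k) + (ι k - k) + ((k : ℤ_[p]) - z) := by ring
  rw [hsum]
  exact dvd_add (dvd_add h1 h2) h3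
end

section
/- Let p be a prime with p ≠ 3, and q ∈ 1 + pℤ_p, q ≠ 1. If z ∈ ℤ_p satisfies ι_q(z) = z, then z = 0 or z = 1. -/
open Finset

private lemma aux_two_pow : ∀ v : ℕ, 2 ≤ v → v + 2 ≤ 2 ^ v := by
  intro v hv
  induction v with
  | zero => omega
  | succ n ih =>
    rcases Nat.lt_or_ge n 2 with h | h
    · interval_cases n
      · omega
      · norm_num
    · have h1 := ih h
      have h2 : 2 ^ (n + 1) = 2 * 2 ^ n := by ring
      omega

private lemma aux_five_pow : ∀ v : ℕ, 1 ≤ v → v + 3 ≤ 5 ^ v := by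
  intro v hv
  induction v with
  | zero => omega
  | succ n ih =>
    rcases Nat.lt_or_ge n 1 with h | h
    · interval_cases n <;> norm_num
    · have h1 := ih h
      have h2 : 5 ^ (n + 1) = 5 * 5 ^ n := by ring
      omega

/-- Key arithmetic fact: for a prime `p ≠ 3` and `k ≥ 3`, the `p`-adic valuation of
`k.choose 2` is at most `k - 3`. -/
private lemma choose_two_factorization {p : ℕ} (hp : p.Prime) (hp3 : p ≠ 3) {k : ℕ}
    (hk : 3 ≤ k) : (k.choose 2).factorization p + 3 ≤ k := by
  have hk0 : k ≠ 0 := by omega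
  have hk1 : k - 1 ≠ 0 := by omega
  have hc0 : k.choose 2 ≠ 0 := (Nat.choose_pos (by omega)).ne'
  have h2 : 2 * k.choose 2 = k * (k - 1) := by
    rw [Nat.choose_two_right]
    rw [Nat.mul_div_cancel' ?hdvd]
    case hdvd =>
      have : Even ((k - 1) * (k - 1 + 1)) := Nat.even_mul_succ_self (k - 1)
      have hk' : k - 1 + 1 = k := by omega
      rw [hk'] at this
      obtain ⟨r, hr⟩ := this
      exact ⟨r, by rw [Nat.mul_comm k (k - 1)]; omega⟩
  set a := k.factorization p with ha
  set b := (k - 1).factorization p with hb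
  have hfact : (2 : ℕ).factorization p + (k.choose 2).factorization p = a + b := by
    have e1 : (2 * k.choose 2).factorization p
        = (2:ℕ).factorization p + (k.choose 2).factorization p := by
      rw [Nat.factorization_mul (by norm_num) hc0]; simp
    have e2 : (k * (k - 1)).factorization p = a + b := by
      rw [Nat.factorization_mul hk0 hk1]; simp [ha, hb]
    rw [← e1, h2, e2]
  have hab : a = 0 ∨ b = 0 := by
    by_contra hcon
    push_neg at hcon
    have h1 : p ∣ k := Nat.dvd_of_factorization_pos hcon.1
    have h2' : p ∣ (k - 1) := Nat.dvd_of_factorization_pos hcon.2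
    have hd : p ∣ 1 := by
      have hd0 := Nat.dvd_sub h1 h2'
      have hkk : k - (k - 1) = 1 := by omega
      rwa [hkk] at hd0
    have := Nat.le_of_dvd one_pos hd
    have := hp.two_le
    omega
  have hpa : p ^ a ≤ k := Nat.ordProj_le p hk0
  have hpb : p ^ b ≤ k := le_trans (Nat.ordProj_le p hk1) (by omega)
  have hpab : p ^ (a + b) ≤ k := by
    rcases hab with h | h <;> simp [h, hpa, hpb]
  rcases eq_or_ne p 2 with rfl | hp2
  · -- p = 2
    have h2f : (2:ℕ).factorization 2 = 1 := Nat.Prime.factorization_self hp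
    rw [h2f] at hfact
    set v := a + b with hv
    rcases Nat.lt_or_ge v 2 with h | h
    · omega
    · have := aux_two_pow v h
      omega
  · -- p odd, p ≠ 3, so p ≥ 5
    have hp5 : 5 ≤ p := by
      have h2 := hp.two_le
      rcases Nat.lt_or_ge p 5 with h | h
      · interval_cases p
        · exact absurd rfl hp2
        · exact absurd rfl hp3
        · exact absurd hp (by norm_num)
      · exact h
    have h2f : (2:ℕ).factorization p = 0 :=
      Nat.factorization_eq_zero_of_not_dvd (fun hdvd => by
        have := Nat.le_of_dvd (by norm_num) hdvd; omega)
    rw [h2f, zero_add] at hfact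
    set v := a + b with hv
    rcases Nat.eq_zero_or_pos v with h | h
    · omega
    · have h5 := aux_five_pow v h
      have : 5 ^ v ≤ p ^ v := Nat.pow_le_pow_left hp5 v
      omega

/-- For `p ≠ 3` and `q ∈ 1 + pℤ_p`, `q ≠ 1`: the only p-adic fixed points of `ι_q`
are `0` and `1`. -/
theorem no_nontrivial_fixed_points (p : ℕ) [Fact p.Prime] (hp3 : p ≠ 3)
    (q : ℤ_[p]) (hq : (p : ℤ_[p]) ∣ q - 1) (hq1 : q ≠ 1)
    (ι : ℤ_[p] → ℤ_[p]) (hcont : Continuous ι)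
    (hval : ∀ n : ℕ, ι n = ∑ i ∈ Finset.range n, q ^ i)
    (z : ℤ_[p]) (hz : ι z = z) :
    z = 0 ∨ z = 1 := by
  by_contra hcon
  push_neg at hcon
  obtain ⟨hz0, hz1⟩ := hcon
  have hp : p.Prime := Fact.out
  set t : ℤ_[p] := q - 1 with ht
  have ht0 : t ≠ 0 := sub_ne_zero.mpr hq1
  have hp1R : (1:ℝ) < p := by exact_mod_cast hp.one_lt
  have hp0R : (0:ℝ) < p := by linarith
  have htle : ‖t‖ ≤ (p:ℝ)⁻¹ := by
    obtain ⟨u, hu⟩ := hq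
    rw [hu, norm_mul, PadicInt.norm_p]
    calc (p:ℝ)⁻¹ * ‖u‖ ≤ (p:ℝ)⁻¹ * 1 := by
          exact mul_le_mul_of_nonneg_left (PadicInt.norm_le_one u) (by positivity)
      _ = (p:ℝ)⁻¹ := mul_one _
  have htpos : 0 < ‖t‖ := norm_pos_iff.mpr ht0
  -- key polynomial identity
  have hid : ∀ n : ℕ, t * ι n - (n : ℤ_[p]) * t - (n.choose 2 : ℤ_[p]) * t ^ 2
      = ∑ k ∈ Finset.Ico 3 (n+1), t ^ k * (n.choose k : ℤ_[p]) := by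
    intro n
    have h1 : t * ι n = q ^ n - 1 := by
      rw [hval n, mul_comm, ht]
      exact geom_sum_mul q n
    have hq' : q = t + 1 := by rw [ht]; ring
    have h2 : q ^ n = ∑ k ∈ Finset.range (n+1), t ^ k * (n.choose k : ℤ_[p]) := by
      rw [hq', add_pow]
      simp
    rcases Nat.lt_or_ge n 3 with hn | hn
    · have hempty : Finset.Ico 3 (n+1) = ∅ := Finset.Ico_eq_empty (by omega)
      rw [hempty, Finset.sum_empty, hval n, ht]
      interval_cases n
      · norm_num
      · norm_num [Finset.sum_range_one]
      · norm_num [Finset.sum_range_succ]; ring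
    · have hsplit : (∑ k ∈ Finset.Ico 0 3, t ^ k * (n.choose k : ℤ_[p]))
          + ∑ k ∈ Finset.Ico 3 (n+1), t ^ k * (n.choose k : ℤ_[p])
          = ∑ k ∈ Finset.Ico 0 (n+1), t ^ k * (n.choose k : ℤ_[p]) :=
        Finset.sum_Ico_consecutive _ (Nat.zero_le 3) (by omega)
      rw [h1, h2, Finset.range_eq_Ico, ← hsplit]
      have h3 : (∑ k ∈ Finset.Ico 0 3, t ^ k * (n.choose k : ℤ_[p]))
          = 1 + (n : ℤ_[p]) * t + (n.choose 2 : ℤ_[p]) * t ^ 2 := by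
        rw [← Finset.range_eq_Ico]
        rw [Finset.sum_range_succ, Finset.sum_range_succ, Finset.sum_range_succ]
        simp [Nat.choose_one_right]
        ring
      rw [h3]
      ring
  -- term bound
  have hterm : ∀ n : ℕ, ∀ k ∈ Finset.Ico 3 (n+1),
      ‖t ^ k * (n.choose k : ℤ_[p])‖
        ≤ ‖(n.choose 2 : ℤ_[p])‖ * ‖t‖ ^ 2 * (p:ℝ)⁻¹ := by
    intro n k hk
    rw [Finset.mem_Ico] at hk
    obtain ⟨hk3, hkn⟩ := hk
    have hkn' : k ≤ n := by omega
    have hmulnat : n.choose k * k.choose 2 = n.choose 2 * (n-2).choose (k-2) :=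
      Nat.choose_mul (n := n) (by omega)
    have hmul : (n.choose k : ℤ_[p]) * (k.choose 2 : ℤ_[p])
        = (n.choose 2 : ℤ_[p]) * ((n-2).choose (k-2) : ℤ_[p]) := by
      exact_mod_cast congrArg (Nat.cast : ℕ → ℤ_[p]) hmulnat
    have hnormmul : ‖(n.choose k : ℤ_[p])‖ * ‖(k.choose 2 : ℤ_[p])‖
        ≤ ‖(n.choose 2 : ℤ_[p])‖ := by
      rw [← norm_mul, hmul, norm_mul]
      exact mul_le_of_le_one_right (norm_nonneg _) (PadicInt.norm_le_one _)
    have hck0 : (k.choose 2 : ℤ_[p]) ≠ 0 := by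
      exact_mod_cast Nat.cast_ne_zero.mpr (Nat.choose_pos (by omega : 2 ≤ k)).ne'
    have hckpos : 0 < ‖(k.choose 2 : ℤ_[p])‖ := norm_pos_iff.mpr hck0
    -- Claim B : p⁻¹ ^ (k-3) ≤ ‖(k.choose 2 : ℤ_[p])‖
    have hB : ((p:ℝ)⁻¹) ^ (k-3) ≤ ‖(k.choose 2 : ℤ_[p])‖ := by
      by_contra hB
      push_neg at hB
      have hcast : ((k.choose 2 : ℤ) : ℤ_[p]) = ((k.choose 2 : ℕ) : ℤ_[p]) := by
        push_cast; ring
      have hlt : ‖((k.choose 2 : ℤ) : ℤ_[p])‖ < (p:ℝ) ^ ((-(k-2 : ℕ) : ℤ) + 1) := by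
        rw [hcast]
        have : ((-(k-2 : ℕ) : ℤ) + 1) = -((k-3 : ℕ) : ℤ) := by
          push_cast; omega
        rw [this]
        calc ‖((k.choose 2 : ℕ) : ℤ_[p])‖ < ((p:ℝ)⁻¹) ^ (k-3) := hB
          _ = (p:ℝ) ^ (-((k-3 : ℕ) : ℤ)) := by
              rw [zpow_neg, zpow_natCast, inv_pow]
      have hle : ‖((k.choose 2 : ℤ) : ℤ_[p])‖ ≤ (p:ℝ) ^ (-(k-2 : ℕ) : ℤ) :=
        (PadicInt.norm_le_pow_iff_norm_lt_pow_add_one _ _).mpr hlt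
      have hdvd : ((p : ℤ)) ^ (k-2) ∣ (k.choose 2 : ℤ) :=
        PadicInt.norm_int_le_pow_iff_dvd.mp hle
      have hdvd' : p ^ (k-2) ∣ k.choose 2 := by exact_mod_cast hdvd
      have hle2 : k - 2 ≤ (k.choose 2).factorization p :=
        (Nat.Prime.pow_dvd_iff_le_factorization hp
          (Nat.choose_pos (by omega : 2 ≤ k)).ne').mp hdvd'
      have := choose_two_factorization hp hp3 hk3
      omega
    -- finish the term bound
    rw [norm_mul, norm_pow]
    have h1 : ‖(n.choose k : ℤ_[p])‖ ≤ ‖(n.choose 2 : ℤ_[p])‖ / ‖(k.choose 2 : ℤ_[p])‖ :=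
      (le_div_iff₀ hckpos).mpr hnormmul
    have htk : ‖t‖ ^ k ≤ ‖t‖ ^ 2 * ((p:ℝ)⁻¹ * ‖(k.choose 2 : ℤ_[p])‖) := by
      have hksplit : k = 2 + ((k - 3) + 1) := by omega
      calc ‖t‖ ^ k = ‖t‖ ^ 2 * (‖t‖ ^ (k-3) * ‖t‖) := by
            rw [← pow_succ, ← pow_add, ← hksplit]
        _ ≤ ‖t‖ ^ 2 * (‖(k.choose 2 : ℤ_[p])‖ * (p:ℝ)⁻¹) := by
            apply mul_le_mul_of_nonneg_left _ (by positivity)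
            apply mul_le_mul _ htle (le_of_lt htpos) (norm_nonneg _)
            calc ‖t‖ ^ (k-3) ≤ ((p:ℝ)⁻¹) ^ (k-3) :=
                  pow_le_pow_left₀ (norm_nonneg t) htle _
              _ ≤ ‖(k.choose 2 : ℤ_[p])‖ := hB
        _ = ‖t‖ ^ 2 * ((p:ℝ)⁻¹ * ‖(k.choose 2 : ℤ_[p])‖) := by ring
    calc ‖t‖ ^ k * ‖(n.choose k : ℤ_[p])‖
        ≤ (‖t‖ ^ 2 * ((p:ℝ)⁻¹ * ‖(k.choose 2 : ℤ_[p])‖))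
          * (‖(n.choose 2 : ℤ_[p])‖ / ‖(k.choose 2 : ℤ_[p])‖) := by
          apply mul_le_mul htk h1 (norm_nonneg _) (by positivity)
      _ = ‖(n.choose 2 : ℤ_[p])‖ * ‖t‖ ^ 2 * (p:ℝ)⁻¹ := by
          field_simp
  -- sum estimate
  have hsum : ∀ n : ℕ, ‖t * ι n - (n : ℤ_[p]) * t - (n.choose 2 : ℤ_[p]) * t ^ 2‖
      ≤ ‖(n.choose 2 : ℤ_[p])‖ * ‖t‖ ^ 2 * (p:ℝ)⁻¹ := by
    intro n
    rw [hid n]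
    exact IsUltrametricDist.norm_sum_le_of_forall_le_of_nonneg (by positivity) (hterm n)
  -- endgame
  set c : ℤ_[p] := z * (z - 1) with hc
  have hc0 : c ≠ 0 := mul_ne_zero hz0 (sub_ne_zero.mpr hz1)
  have hcpos : 0 < ‖c‖ := norm_pos_iff.mpr hc0
  have h2pos : 0 < ‖(2 : ℤ_[p])‖ := norm_pos_iff.mpr (by norm_num)
  set ε₂ : ℝ := ‖t‖ * ‖c‖ / ‖(2 : ℤ_[p])‖ with hε₂
  have hε₂pos : 0 < ε₂ := by positivity
  have hεpos : 0 < min ‖c‖ ε₂ := lt_min hcpos hε₂pos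
  -- find a natural number close to z with ι n close to ι z
  obtain ⟨n, hnball, hnι⟩ : ∃ n : ℕ, ‖(n : ℤ_[p]) - z‖ < min ‖c‖ ε₂ ∧ ‖ι n - ι z‖ < ε₂ := by
    have hopen : IsOpen (Metric.ball z (min ‖c‖ ε₂) ∩ ι ⁻¹' Metric.ball (ι z) ε₂) :=
      Metric.isOpen_ball.inter (Metric.isOpen_ball.preimage hcont)
    have hzmem : z ∈ Metric.ball z (min ‖c‖ ε₂) ∩ ι ⁻¹' Metric.ball (ι z) ε₂ := by
      constructor
      · exact Metric.mem_ball_self hεpos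
      · exact Metric.mem_ball_self hε₂pos
    obtain ⟨n, hn⟩ := PadicInt.denseRange_natCast.exists_mem_open hopen ⟨z, hzmem⟩
    exact ⟨n, by simpa [Metric.mem_ball, dist_eq_norm] using hn.1,
      by simpa [Metric.mem_ball, dist_eq_norm] using hn.2⟩
  have hn1 : ‖(n : ℤ_[p]) - z‖ < ‖c‖ := lt_of_lt_of_le hnball (min_le_left _ _)
  have hn2 : ‖(n : ℤ_[p]) - z‖ < ε₂ := lt_of_lt_of_le hnball (min_le_right _ _)
  -- n ≥ 2
  have hn2' : 2 ≤ n := by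
    by_contra hcontra
    push_neg at hcontra
    interval_cases n
    · -- n = 0 : ‖0 - z‖ = ‖z‖ ≥ ‖c‖
      have h1 : ‖c‖ ≤ ‖z‖ := by
        rw [hc, norm_mul]
        exact mul_le_of_le_one_right (norm_nonneg _) (PadicInt.norm_le_one _)
      simp only [Nat.cast_zero, zero_sub, norm_neg] at hn1
      linarith
    · -- n = 1 : ‖1 - z‖ = ‖z - 1‖ ≥ ‖c‖
      have h1 : ‖c‖ ≤ ‖z - 1‖ := by
        rw [hc, norm_mul]
        exact mul_le_of_le_one_left (norm_nonneg _) (PadicInt.norm_le_one _)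
      rw [show ((1:ℕ) : ℤ_[p]) - z = -(z - 1) by ring] at hn1
      rw [norm_neg] at hn1
      linarith
  -- ‖n.choose 2‖ * ‖2‖ = ‖c‖
  have hC2 : (2 : ℤ_[p]) * (n.choose 2 : ℤ_[p]) = (n : ℤ_[p]) * ((n : ℤ_[p]) - 1) := by
    have hnat : 2 * n.choose 2 = n * (n - 1) := by
      rw [Nat.choose_two_right]
      rw [Nat.mul_div_cancel' ?hdvd]
      case hdvd =>
        have : Even ((n - 1) * (n - 1 + 1)) := Nat.even_mul_succ_self (n - 1)
        have hn' : n - 1 + 1 = n := by omega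
        rw [hn'] at this
        obtain ⟨r, hr⟩ := this
        exact ⟨r, by rw [Nat.mul_comm n (n - 1)]; omega⟩
    have := congrArg (Nat.cast : ℕ → ℤ_[p]) hnat
    push_cast [Nat.cast_sub (by omega : 1 ≤ n)] at this
    exact_mod_cast this
  have hprodnorm : ‖(n : ℤ_[p]) * ((n : ℤ_[p]) - 1)‖ = ‖c‖ := by
    have hdiff : (n : ℤ_[p]) * ((n : ℤ_[p]) - 1) - c = ((n : ℤ_[p]) - z) * ((n : ℤ_[p]) + z - 1) := by
      rw [hc]; ring
    have hdnorm : ‖(n : ℤ_[p]) * ((n : ℤ_[p]) - 1) - c‖ < ‖c‖ := by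
      rw [hdiff, norm_mul]
      calc ‖(n : ℤ_[p]) - z‖ * ‖(n : ℤ_[p]) + z - 1‖ ≤ ‖(n : ℤ_[p]) - z‖ :=
            mul_le_of_le_one_right (norm_nonneg _) (PadicInt.norm_le_one _)
        _ < ‖c‖ := hn1
    have : (n : ℤ_[p]) * ((n : ℤ_[p]) - 1) = ((n : ℤ_[p]) * ((n : ℤ_[p]) - 1) - c) + c := by ring
    rw [this, PadicInt.norm_add_eq_max_of_ne hdnorm.ne, max_eq_right hdnorm.le]
  have hCn2norm : ‖(n.choose 2 : ℤ_[p])‖ * ‖(2 : ℤ_[p])‖ = ‖c‖ := by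
    rw [mul_comm, ← norm_mul, hC2, hprodnorm]
  have hCn2 : ‖(n.choose 2 : ℤ_[p])‖ = ‖c‖ / ‖(2 : ℤ_[p])‖ :=
    eq_div_of_mul_eq h2pos.ne' hCn2norm
  have hCn2pos : 0 < ‖(n.choose 2 : ℤ_[p])‖ := by rw [hCn2]; positivity
  -- upper bound : ‖t * (ι n - n)‖ < ‖t‖^2 * ‖c‖ / ‖2‖
  have hup : ‖t * ι n - (n : ℤ_[p]) * t‖ < ‖t‖ ^ 2 * ‖c‖ / ‖(2 : ℤ_[p])‖ := by
    have hι : ‖ι n - (n : ℤ_[p])‖ < ε₂ := by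
      have hd : ι n - (n : ℤ_[p]) = (ι n - ι z) + (z - (n : ℤ_[p])) := by rw [hz]; ring
      rw [hd]
      calc ‖(ι n - ι z) + (z - (n : ℤ_[p]))‖ ≤ max ‖ι n - ι z‖ ‖z - (n : ℤ_[p])‖ :=
            PadicInt.nonarchimedean _ _
        _ < ε₂ := by
            apply max_lt hnι
            rw [show z - (n : ℤ_[p]) = -((n : ℤ_[p]) - z) by ring, norm_neg]
            exact hn2
    have : t * ι n - (n : ℤ_[p]) * t = t * (ι n - (n : ℤ_[p])) := by ring
    rw [this, norm_mul]
    calc ‖t‖ * ‖ι n - (n : ℤ_[p])‖ < ‖t‖ * ε₂ := by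
          exact mul_lt_mul_of_pos_left hι htpos
      _ = ‖t‖ ^ 2 * ‖c‖ / ‖(2 : ℤ_[p])‖ := by rw [hε₂]; ring
  -- lower bound : ‖t * ι n - n * t‖ = ‖c‖ * ‖t‖^2 / ‖2‖
  have hlow : ‖t * ι n - (n : ℤ_[p]) * t‖ = ‖t‖ ^ 2 * ‖c‖ / ‖(2 : ℤ_[p])‖ := by
    have hBig : ‖(n.choose 2 : ℤ_[p]) * t ^ 2‖ = ‖t‖ ^ 2 * ‖c‖ / ‖(2 : ℤ_[p])‖ := by
      rw [norm_mul, norm_pow, hCn2]; ring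
    have hsmall : ‖t * ι n - (n : ℤ_[p]) * t - (n.choose 2 : ℤ_[p]) * t ^ 2‖
        < ‖(n.choose 2 : ℤ_[p]) * t ^ 2‖ := by
      calc ‖t * ι n - (n : ℤ_[p]) * t - (n.choose 2 : ℤ_[p]) * t ^ 2‖
          ≤ ‖(n.choose 2 : ℤ_[p])‖ * ‖t‖ ^ 2 * (p:ℝ)⁻¹ := hsum n
        _ < ‖(n.choose 2 : ℤ_[p])‖ * ‖t‖ ^ 2 * 1 := by
            apply mul_lt_mul_of_pos_left _ (by positivity)
            rw [inv_lt_one_iff₀]; right; exact hp1R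
        _ = ‖(n.choose 2 : ℤ_[p]) * t ^ 2‖ := by rw [norm_mul, norm_pow, mul_one]
    have hrw : t * ι n - (n : ℤ_[p]) * t
        = (t * ι n - (n : ℤ_[p]) * t - (n.choose 2 : ℤ_[p]) * t ^ 2)
          + (n.choose 2 : ℤ_[p]) * t ^ 2 := by ring
    rw [hrw, PadicInt.norm_add_eq_max_of_ne hsmall.ne, max_eq_right hsmall.le, hBig]
  rw [hlow] at hup
  exact lt_irrefl _ hup
end

section
/- Let q ∈ 1 + 9ℤ_3, q ≠ 1. If z ∈ ℤ_3 satisfies ι_q(z) = z, then z = 0 or z = 1. -/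
set_option maxHeartbeats 1000000

open Finset

/-- Binomial identity: `C(a+2, b+2) * ((b+2)*(b+1)) = (a+2)*(a+1) * C(a,b)`. -/
lemma choose_shift (a b : ℕ) :
    (a + 2).choose (b + 2) * ((b + 2) * (b + 1)) = (a + 2) * (a + 1) * a.choose b := by
  have h1 := Nat.add_one_mul_choose_eq a b
  have h2 := Nat.add_one_mul_choose_eq (a + 1) (b + 1)
  zify at h1 h2 ⊢
  linear_combination (-(b : ℤ) - 1) * h2 + (-(a : ℤ) - 2) * h1

lemma growth (k : ℕ) (hk : 3 ≤ k) : k * (k - 1) < 9 ^ (k - 2) := by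
  obtain ⟨m, rfl⟩ : ∃ m, k = m + 3 := ⟨k - 3, by omega⟩
  have : ∀ m : ℕ, (m + 3) * (m + 2) < 9 ^ (m + 1) := by
    intro m
    induction m with
    | zero => norm_num
    | succ n ih =>
      have : 9 ^ (n + 1 + 1) = 9 * 9 ^ (n + 1) := by ring
      rw [this]
      nlinarith [ih]
  have h := this m
  simpa [show m + 3 - 1 = m + 2 by omega, show m + 3 - 2 = m + 1 by omega] using h

lemma norm_two_padic : ‖(2 : ℤ_[3])‖ = 1 := by
  have h1 : ‖(2 : ℤ_[3])‖ ≤ 1 := PadicInt.norm_le_one _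
  have h2 : ¬ ‖((2 : ℤ) : ℤ_[3])‖ < 1 := by
    rw [PadicInt.norm_int_lt_one_iff_dvd]
    decide
  push_cast at h2
  linarith [lt_or_eq_of_le h1, not_lt.mp h2]

/-- Norm of cast of a positive natural not too divisible by 3. -/
lemma norm_natCast_gt (m t : ℕ) (hm : 0 < m) (h : m < 3 ^ t) :
    (3 : ℝ) ^ (-(t : ℤ)) < ‖((m : ℤ) : ℤ_[3])‖ := by
  by_contra hle
  push_neg at hle
  rw [show ((3:ℝ) ^ (-(t : ℤ))) = ((3:ℕ):ℝ) ^ (-(t : ℤ)) by norm_num] at hle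
  rw [PadicInt.norm_le_pow_iff_mem_span_pow, Ideal.mem_span_singleton] at hle
  rw [PadicInt.pow_p_dvd_int_iff] at hle
  have := Int.le_of_dvd (by exact_mod_cast hm) hle
  have h3 : (3 : ℤ) ^ t ≤ (m : ℤ) := this
  have : (3 : ℤ) ^ t > (m : ℤ) := by exact_mod_cast h
  omega

/-- For `q ∈ 1 + 9ℤ_3`, `q ≠ 1`: the only 3-adic fixed points of `ι_q` are `0` and `1`. -/
theorem no_nontrivial_fixed_points_mod_nine (q : ℤ_[3]) (hq : (9 : ℤ_[3]) ∣ q - 1)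
    (hq1 : q ≠ 1)
    (ι : ℤ_[3] → ℤ_[3]) (hcont : Continuous ι)
    (hval : ∀ n : ℕ, ι n = ∑ i ∈ Finset.range n, q ^ i)
    (z : ℤ_[3]) (hz : ι z = z) :
    z = 0 ∨ z = 1 := by
  set c : ℤ_[3] := q - 1 with hc
  have hc0 : c ≠ 0 := sub_ne_zero.mpr hq1
  have hcnorm : ‖c‖ ≤ (3 : ℝ) ^ (-(2 : ℤ)) := by
    rw [show ((3:ℝ) ^ (-(2 : ℤ))) = ((3:ℕ):ℝ) ^ (-((2:ℕ) : ℤ)) by norm_num]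
    rw [PadicInt.norm_le_pow_iff_mem_span_pow, Ideal.mem_span_singleton]
    have h32 : ((3:ℕ) : ℤ_[3]) ^ 2 = 9 := by push_cast; norm_num
    rw [h32]; exact hq
  have hcpos : 0 < ‖c‖ := norm_pos_iff.mpr hc0
  -- key per-term estimate
  have key_term : ∀ n k : ℕ, 2 ≤ n → 3 ≤ k → k ≤ n →
      ‖((n.choose k : ℤ_[3])) * c ^ k‖ < ‖((n * (n - 1) : ℕ) : ℤ_[3])‖ * ‖c‖ ^ 2 := by
    intro n k hn hk hkn
    obtain ⟨a, rfl⟩ : ∃ a, n = a + 2 := ⟨n - 2, by omega⟩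
    obtain ⟨b, rfl⟩ : ∃ b, k = b + 2 := ⟨k - 2, by omega⟩
    have hid := choose_shift a b
    -- norms
    have hnn : (a + 2 - 1 : ℕ) = a + 1 := by omega
    rw [hnn]
    have hcast : ((((a+2).choose (b+2) : ℕ)) : ℤ_[3]) * (((b+2)*(b+1) : ℕ) : ℤ_[3])
        = (((a+2)*(a+1) : ℕ) : ℤ_[3]) * ((a.choose b : ℕ) : ℤ_[3]) := by
      push_cast
      exact_mod_cast congrArg (fun x : ℕ => (x : ℤ_[3])) hid
    have hnormid : ‖(((a+2).choose (b+2) : ℕ) : ℤ_[3])‖ * ‖(((b+2)*(b+1) : ℕ) : ℤ_[3])‖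
        = ‖(((a+2)*(a+1) : ℕ) : ℤ_[3])‖ * ‖((a.choose b : ℕ) : ℤ_[3])‖ := by
      rw [← norm_mul, ← norm_mul, hcast]
    have hle1 : ‖(((a+2).choose (b+2) : ℕ) : ℤ_[3])‖ * ‖(((b+2)*(b+1) : ℕ) : ℤ_[3])‖
        ≤ ‖(((a+2)*(a+1) : ℕ) : ℤ_[3])‖ := by
      rw [hnormid]
      exact mul_le_of_le_one_right (norm_nonneg _) (PadicInt.norm_le_one _)
    -- strict: ‖c‖^b < ‖(b+2)(b+1)‖  (here b = k-2 ≥ 1)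
    have hb1 : 1 ≤ b := by omega
    have hgrow : (b + 2) * (b + 1) < 9 ^ b := by
      have := growth (b + 2) (by omega)
      simpa [show b + 2 - 1 = b + 1 by omega, show b + 2 - 2 = b by omega] using this
    have hkk : (3 : ℝ) ^ (-((2 * b : ℕ) : ℤ)) < ‖((((b+2)*(b+1) : ℕ) : ℤ) : ℤ_[3])‖ := by
      apply norm_natCast_gt _ _ (by positivity)
      calc (b + 2) * (b + 1) < 9 ^ b := hgrow
        _ = 3 ^ (2 * b) := by rw [pow_mul]; norm_num
    have hcb : ‖c‖ ^ b ≤ (3 : ℝ) ^ (-((2 * b : ℕ) : ℤ)) := by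
      calc ‖c‖ ^ b ≤ ((3 : ℝ) ^ (-(2:ℤ))) ^ b := by
            exact pow_le_pow_left₀ (norm_nonneg _) hcnorm b
        _ = (3 : ℝ) ^ (-((2 * b : ℕ) : ℤ)) := by
            rw [← zpow_natCast (((3:ℝ) ^ (-(2:ℤ)))) b, ← zpow_mul]
            congr 1
            try push_cast
            try ring
    have hcb' : ‖c‖ ^ b < ‖(((b+2)*(b+1) : ℕ) : ℤ_[3])‖ := by
      have : ((((b+2)*(b+1) : ℕ) : ℤ) : ℤ_[3]) = (((b+2)*(b+1) : ℕ) : ℤ_[3]) := by push_cast; ring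
      rw [this] at hkk
      exact lt_of_le_of_lt hcb hkk
    have hch : 0 < ‖(((a+2).choose (b+2) : ℕ) : ℤ_[3])‖ := by
      rw [norm_pos_iff]
      exact_mod_cast Nat.cast_ne_zero.mpr (Nat.choose_pos (by omega : b + 2 ≤ a + 2)).ne'
    calc ‖((a+2).choose (b+2) : ℤ_[3]) * c ^ (b+2)‖
        = ‖(((a+2).choose (b+2) : ℕ) : ℤ_[3])‖ * (‖c‖ ^ b * ‖c‖ ^ 2) := by
          rw [norm_mul, norm_pow, ← pow_add]
      _ = (‖(((a+2).choose (b+2) : ℕ) : ℤ_[3])‖ * ‖c‖ ^ b) * ‖c‖ ^ 2 := by ring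
      _ < (‖(((a+2).choose (b+2) : ℕ) : ℤ_[3])‖ * ‖(((b+2)*(b+1) : ℕ) : ℤ_[3])‖) * ‖c‖ ^ 2 := by
          apply mul_lt_mul_of_pos_right _ (by positivity)
          exact mul_lt_mul_of_pos_left hcb' hch
      _ ≤ ‖(((a+2)*(a+1) : ℕ) : ℤ_[3])‖ * ‖c‖ ^ 2 := by
          apply mul_le_mul_of_nonneg_right hle1 (by positivity)
  -- key identity for naturals
  have key_nat : ∀ n : ℕ, ‖ι n - n‖ = ‖(n : ℤ_[3])‖ * ‖(n : ℤ_[3]) - 1‖ * ‖c‖ := by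
    intro n
    have hgeo : (ι n - n) * c = q ^ n - 1 - n * c := by
      rw [hval n, hc]
      have := geom_sum_mul q n
      rw [sub_mul, this]
      try ring
    -- compute ‖q^n - 1 - n c‖
    have hmain : ‖q ^ n - 1 - n * c‖ = ‖(n : ℤ_[3]) * ((n : ℤ_[3]) - 1)‖ * ‖c‖ ^ 2 := by
      rcases Nat.lt_or_ge n 2 with hn | hn
      · interval_cases n <;> simp [hc]
      · -- n ≥ 2
        have hqc : q = c + 1 := by rw [hc]; ring
        have hbinom : q ^ n = ∑ k ∈ range (n + 1), c ^ k * 1 ^ (n - k) * (n.choose k) := by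
          rw [hqc, add_pow]
        have hsum : q ^ n - 1 - n * c = ∑ k ∈ Ico 2 (n + 1), (n.choose k : ℤ_[3]) * c ^ k := by
          rw [hbinom]
          rw [show range (n + 1) = Ico 0 (n + 1) by rw [range_eq_Ico]]
          rw [Finset.sum_eq_sum_Ico_succ_bot (by omega : 0 < n + 1)]
          rw [Finset.sum_eq_sum_Ico_succ_bot (by omega : 0 + 1 < n + 1)]
          simp only [pow_zero, one_pow, Nat.choose_zero_right, Nat.choose_one_right, pow_one,
            Nat.cast_one, mul_one, one_mul, zero_add]
          have hcomm : ∑ x ∈ Ico 2 (n+1), c ^ x * (1:ℤ_[3]) ^ (n - x) * (n.choose x : ℤ_[3])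
              = ∑ k ∈ Ico 2 (n+1), (n.choose k : ℤ_[3]) * c ^ k :=
            Finset.sum_congr rfl (fun k _ => by ring)
          simp only [Nat.reduceAdd]
          rw [← hcomm]
          simp only [pow_zero, one_pow, Nat.choose_zero_right, Nat.choose_one_right, pow_one,
            Nat.cast_one, mul_one, one_mul, zero_add]
          ring
        rw [hsum]
        -- peel off k = 2
        rw [Finset.sum_eq_sum_Ico_succ_bot (by omega : 2 < n + 1)]
        have hA : ‖(n.choose 2 : ℤ_[3]) * c ^ 2‖ = ‖(n : ℤ_[3]) * ((n : ℤ_[3]) - 1)‖ * ‖c‖ ^ 2 := by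
          obtain ⟨a, rfl⟩ : ∃ a, n = a + 2 := ⟨n - 2, by omega⟩
          have h20 := choose_shift a 0
          simp only [Nat.choose_zero_right, mul_one] at h20
          -- (a+2).choose 2 * 2 = (a+2)*(a+1)
          have hcast2 : ((a+2).choose 2 : ℤ_[3]) * 2 = (((a+2) : ℕ) : ℤ_[3]) * (((a+1) : ℕ) : ℤ_[3]) := by
            have : (((a+2).choose 2 * (2 * 1) : ℕ) : ℤ_[3]) = (((a+2)*(a+1) : ℕ) : ℤ_[3]) := by
              exact_mod_cast congrArg (fun x : ℕ => (x : ℤ_[3])) h20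
            push_cast at this ⊢
            linear_combination this
          have hnrm : ‖((a+2).choose 2 : ℤ_[3])‖ = ‖((a + 2 : ℕ) : ℤ_[3]) * ((a + 1 : ℕ) : ℤ_[3])‖ := by
            have := congrArg norm hcast2
            rwa [norm_mul, norm_two_padic, mul_one] at this
          rw [norm_mul, norm_pow, hnrm]
          congr 2
          push_cast
          ring
        rcases Nat.eq_or_lt_of_le hn with h2 | h2
        · -- n = 2 : the tail is empty
          subst h2
          simp only [show (2:ℕ) + 1 = 3 from rfl, Ico_self, Finset.sum_empty, add_zero]
          simpa using hA
        · have hApos : 0 < ‖(n.choose 2 : ℤ_[3]) * c ^ 2‖ := by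
            rw [norm_pos_iff]
            apply mul_ne_zero
            · exact_mod_cast Nat.cast_ne_zero.mpr (Nat.choose_pos (by omega : 2 ≤ n)).ne'
            · exact pow_ne_zero _ hc0
          have hT : ‖∑ k ∈ Ico 3 (n + 1), (n.choose k : ℤ_[3]) * c ^ k‖
              < ‖(n.choose 2 : ℤ_[3]) * c ^ 2‖ := by
            rcases (Ico 3 (n+1)).eq_empty_or_nonempty with he | hne
            · rw [he]; simpa using hApos
            · -- bound each term
              obtain ⟨k0, hk0mem, hk0⟩ := Finset.exists_mem_eq_sup' hne
                (fun k => ‖(n.choose k : ℤ_[3]) * c ^ k‖)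
              have hsumle := hne.norm_sum_le_sup'_norm (fun k => (n.choose k : ℤ_[3]) * c ^ k)
              rw [hk0] at hsumle
              refine lt_of_le_of_lt hsumle ?_
              simp only [mem_Ico] at hk0mem
              have := key_term n k0 hn hk0mem.1 (by omega)
              calc ‖(n.choose k0 : ℤ_[3]) * c ^ k0‖
                  < ‖((n * (n-1) : ℕ) : ℤ_[3])‖ * ‖c‖ ^ 2 := this
                _ = ‖(n.choose 2 : ℤ_[3]) * c ^ 2‖ := by
                    rw [hA]
                    have h1n : 1 ≤ n := by omega
                    have hcasteq : ((n * (n-1) : ℕ) : ℤ_[3]) = (n : ℤ_[3]) * ((n : ℤ_[3]) - 1) := by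
                      push_cast [Nat.cast_sub h1n]
                      ring
                    rw [hcasteq]
          rw [PadicInt.norm_add_eq_max_of_ne hT.ne', max_eq_left hT.le]
          exact hA
    -- deduce
    have : ‖ι n - n‖ * ‖c‖ = (‖(n : ℤ_[3])‖ * ‖(n : ℤ_[3]) - 1‖ * ‖c‖) * ‖c‖ := by
      rw [← norm_mul, hgeo, hmain, norm_mul]
      ring
    exact mul_right_cancel₀ (ne_of_gt hcpos) this
  -- extend to all of ℤ_[3] by density
  have hFG : (fun z : ℤ_[3] => ‖ι z - z‖) = fun z : ℤ_[3] => ‖z‖ * ‖z - 1‖ * ‖c‖ := by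
    apply PadicInt.denseRange_natCast.equalizer
    · exact (hcont.sub continuous_id).norm
    · exact ((continuous_norm.mul (continuous_id.sub continuous_const).norm).mul continuous_const)
    · funext n
      exact key_nat n
  have hz0 : ‖z‖ * ‖z - 1‖ * ‖c‖ = 0 := by
    have := congrFun hFG z
    rw [← this, hz, sub_self, norm_zero]
  rcases mul_eq_zero.mp hz0 with h | h
  · rcases mul_eq_zero.mp h with h' | h'
    · left; exact norm_eq_zero.mp h'
    · right; exact sub_eq_zero.mp (norm_eq_zero.mp h')
  · exact absurd h (ne_of_gt hcpos)
end

section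
/- ι_4(−1/2) = −1/2 in ℤ_3; that is, −1/2 is a nontrivial 3-adic fixed point of ι_4. -/
private def aSeq : ℕ → ℕ
  | 0 => 0
  | k + 1 => 3 * aSeq k + 1

private lemma aSeq_spec (k : ℕ) : 2 * aSeq k + 1 = 3 ^ k := by
  induction k with
  | zero => rfl
  | succ k ih => simp only [aSeq, pow_succ]; omega

private lemma dvd_aux (k : ℕ) : (3 : ℤ) ^ (k + 1) ∣ 2 ^ (3 ^ k) + 1 := by
  induction k with
  | zero => norm_num
  | succ k ih =>
    obtain ⟨c, hc⟩ := ih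
    refine ⟨c * (3 ^ (2 * k + 1) * c ^ 2 - 3 ^ (k + 1) * c + 1), ?_⟩
    have hx : (2 : ℤ) ^ (3 ^ (k + 1)) = ((2 : ℤ) ^ (3 ^ k)) ^ 3 := by
      rw [← pow_mul, pow_succ, mul_comm]
    have hy : (2 : ℤ) ^ (3 ^ k) = 3 ^ (k + 1) * c - 1 := by linarith
    rw [hx, hy]; ring

/-- `ι_4(−1/2) = −1/2` in `ℤ_3`: the element `z` with `2z = −1` is a nontrivial
3-adic fixed point of `ι_4`. -/
theorem iota_four_fixed_point
    (ι : ℤ_[3] → ℤ_[3]) (hcont : Continuous ι)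
    (hval : ∀ n : ℕ, ι n = ∑ i ∈ Finset.range n, (4 : ℤ_[3]) ^ i)
    (z : ℤ_[3]) (hz : 2 * z = -1) :
    ι z = z ∧ z ≠ 0 ∧ z ≠ 1 := by
  have h2 : ‖(2 : ℤ_[3])‖ = 1 := by
    have h1 : ‖((2 : ℤ) : ℤ_[3])‖ ≤ 1 := PadicInt.norm_le_one _
    have h2' : ¬ ‖((2 : ℤ) : ℤ_[3])‖ < 1 := by
      rw [PadicInt.norm_int_lt_one_iff_dvd]; decide
    push_cast at h1 h2'
    linarith [lt_or_eq_of_le h1]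
  have h3 : ‖(3 : ℤ_[3])‖ = (3 : ℝ)⁻¹ := by
    simpa using PadicInt.norm_p (p := 3)
  -- cast of aSeq_spec
  have hspec : ∀ k, (2 : ℤ_[3]) * (aSeq k : ℤ_[3]) + 1 = 3 ^ k := by
    intro k
    exact_mod_cast congrArg (fun n : ℕ => (n : ℤ_[3])) (aSeq_spec k)
  -- aSeq k → z
  have key1 : ∀ k, ‖(aSeq k : ℤ_[3]) - z‖ = ((3 : ℝ)⁻¹) ^ k := by
    intro k
    have hm : (2 : ℤ_[3]) * ((aSeq k : ℤ_[3]) - z) = 3 ^ k := by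
      linear_combination hspec k - hz
    calc ‖(aSeq k : ℤ_[3]) - z‖
        = ‖(2 : ℤ_[3])‖ * ‖(aSeq k : ℤ_[3]) - z‖ := by rw [h2, one_mul]
      _ = ‖(2 : ℤ_[3]) * ((aSeq k : ℤ_[3]) - z)‖ := (norm_mul _ _).symm
      _ = ‖(3 : ℤ_[3]) ^ k‖ := by rw [hm]
      _ = ((3 : ℝ)⁻¹) ^ k := by rw [norm_pow, h3]
  have key2 : ∀ k, ‖ι (aSeq k) - z‖ ≤ ((3 : ℝ)⁻¹) ^ k := by
    intro k
    have hg : (3 : ℤ_[3]) * ι (aSeq k) = 4 ^ (aSeq k) - 1 := by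
      rw [hval (aSeq k), mul_comm]
      have := geom_sum_mul (4 : ℤ_[3]) (aSeq k)
      norm_num at this
      linear_combination this
    have hp : (2 : ℤ_[3]) ^ (3 ^ k) = 2 * 4 ^ (aSeq k) := by
      rw [← aSeq_spec k, pow_succ, pow_mul]
      norm_num; ring
    have h6 : (6 : ℤ_[3]) * (ι (aSeq k) - z) = 2 ^ (3 ^ k) + 1 := by
      rw [hp]; linear_combination 2 * hg - 3 * hz
    have hnorm : ‖(2 : ℤ_[3]) ^ (3 ^ k) + 1‖ ≤ ((3 : ℝ)⁻¹) ^ (k + 1) := by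
      have hc : ((2 ^ (3 ^ k) + 1 : ℤ) : ℤ_[3]) = 2 ^ (3 ^ k) + 1 := by push_cast; ring
      have := (PadicInt.norm_int_le_pow_iff_dvd (p := 3) (k := 2 ^ (3 ^ k) + 1)
        (n := k + 1)).mpr (dvd_aux k)
      rw [hc] at this
      calc ‖(2 : ℤ_[3]) ^ (3 ^ k) + 1‖ ≤ (3 : ℝ) ^ (-(k + 1 : ℕ) : ℤ) := by
            exact_mod_cast this
        _ = ((3 : ℝ)⁻¹) ^ (k + 1) := by
            rw [zpow_neg, zpow_natCast, inv_pow]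
    have h6n : ‖(6 : ℤ_[3]) * (ι (aSeq k) - z)‖ = (3 : ℝ)⁻¹ * ‖ι (aSeq k) - z‖ := by
      have : (6 : ℤ_[3]) = 2 * 3 := by norm_num
      rw [this, mul_assoc, norm_mul, norm_mul, h2, h3, one_mul]
    have hineq : (3 : ℝ)⁻¹ * ‖ι (aSeq k) - z‖ ≤ (3 : ℝ)⁻¹ * ((3 : ℝ)⁻¹) ^ k := by
      rw [← h6n, h6]
      calc ‖(2 : ℤ_[3]) ^ (3 ^ k) + 1‖ ≤ ((3 : ℝ)⁻¹) ^ (k + 1) := hnorm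
        _ = (3 : ℝ)⁻¹ * ((3 : ℝ)⁻¹) ^ k := by ring
    have h3pos : (0 : ℝ) < (3 : ℝ)⁻¹ := by norm_num
    exact le_of_mul_le_mul_left hineq h3pos
  have hlim0 : Filter.Tendsto (fun k : ℕ => ((3 : ℝ)⁻¹) ^ k) Filter.atTop (nhds 0) :=
    tendsto_pow_atTop_nhds_zero_of_lt_one (by norm_num) (by norm_num)
  have t1 : Filter.Tendsto (fun k : ℕ => ((aSeq k : ℤ_[3]))) Filter.atTop (nhds z) := by
    rw [tendsto_iff_norm_sub_tendsto_zero]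
    simpa [key1] using hlim0
  have t2 : Filter.Tendsto (fun k : ℕ => ι (aSeq k)) Filter.atTop (nhds z) := by
    rw [tendsto_iff_norm_sub_tendsto_zero]
    exact squeeze_zero (fun k => norm_nonneg _) key2 hlim0
  have t3 : Filter.Tendsto (fun k : ℕ => ι (aSeq k)) Filter.atTop (nhds (ι z)) :=
    (hcont.tendsto z).comp t1
  refine ⟨tendsto_nhds_unique t3 t2, ?_, ?_⟩
  · rintro rfl; norm_num at hz
  · rintro rfl; norm_num at hz
end

section
/- Let n ≥ 3 and q ∈ ℤ_3 with q ≡ 7 (mod 9). Then for every c ∈ ℤ_3, ι_q(c·3^{n−2}) ≡ c·3^{n−2} (mod 3^n). -/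
private lemma geom_sum_range_add (q : ℤ_[3]) (a b : ℕ) :
    ∑ i ∈ Finset.range (a + b), q ^ i
      = (∑ i ∈ Finset.range a, q ^ i) + q ^ a * ∑ i ∈ Finset.range b, q ^ i := by
  induction b with
  | zero => simp
  | succ b ih =>
    rw [← Nat.add_assoc, Finset.sum_range_succ, Finset.sum_range_succ, ih, pow_add]
    ring

/-- `3^(m+1) ∣ q^(3^m) - 1` when `3 ∣ q - 1`. -/
private lemma pow_three_dvd (q : ℤ_[3]) (h1 : (3 : ℤ_[3]) ∣ q - 1) (m : ℕ) :
    (3 : ℤ_[3]) ^ (m + 1) ∣ q ^ (3 ^ m) - 1 := by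
  induction m with
  | zero => simpa using h1
  | succ m ih =>
    set x := q ^ (3 ^ m) with hx
    have hx3 : q ^ (3 ^ (m + 1)) = x ^ 3 := by
      rw [hx, ← pow_mul, pow_succ]
    have h3x : (3 : ℤ_[3]) ∣ x ^ 2 + x + 1 := by
      have hd : (3 : ℤ_[3]) ∣ x - 1 := dvd_trans (dvd_pow_self 3 (Nat.succ_ne_zero m)) ih
      obtain ⟨u, hu⟩ := hd
      have : x ^ 2 + x + 1 = 3 * (3 * u ^ 2 + 3 * u + 1) := by
        have hxe : x = 1 + 3 * u := by linear_combination hu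
        rw [hxe]; ring
      exact ⟨_, this⟩
    have : x ^ 3 - 1 = (x - 1) * (x ^ 2 + x + 1) := by ring
    rw [hx3, this, pow_succ]
    exact mul_dvd_mul ih h3x

/-- Core: `3^(m+3) ∣ (∑_{i<3^(m+1)} q^i) - 3^(m+1)` when `9 ∣ q - 7`. -/
private lemma core_lemma (q : ℤ_[3]) (hq : (9 : ℤ_[3]) ∣ q - 7) (m : ℕ) :
    (3 : ℤ_[3]) ^ (m + 3) ∣ (∑ i ∈ Finset.range (3 ^ (m + 1)), q ^ i) - 3 ^ (m + 1) := by
  obtain ⟨a, ha⟩ := hq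
  have hqa : q = 7 + 9 * a := by linear_combination ha
  have h1 : (3 : ℤ_[3]) ∣ q - 1 := ⟨2 + 3 * a, by rw [hqa]; ring⟩
  induction m with
  | zero =>
    refine ⟨(2 + 3 * a) * (1 + a), ?_⟩
    have : (3:ℕ) ^ 1 = 3 := by norm_num
    rw [this]
    rw [Finset.sum_range_succ, Finset.sum_range_succ, Finset.sum_range_one, hqa]
    ring
  | succ m ih =>
    set b := 3 ^ (m + 1) with hb
    set S := ∑ i ∈ Finset.range b, q ^ i with hS
    set Q := q ^ b with hQ
    have hsplit : ∑ i ∈ Finset.range (3 ^ (m + 2)), q ^ i = S * (1 + Q + Q ^ 2) := by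
      have h3b : 3 ^ (m + 2) = b + (b + b) := by rw [hb]; ring
      rw [h3b, geom_sum_range_add, geom_sum_range_add, hQ, ← hS]
      ring
    have hQ1 : (3 : ℤ_[3]) ^ (m + 2) ∣ Q - 1 := pow_three_dvd q h1 (m + 1)
    have hQ3 : (3 : ℤ_[3]) ∣ Q - 1 :=
      dvd_trans (dvd_pow_self 3 (Nat.succ_ne_zero (m + 1))) hQ1
    obtain ⟨u, hu⟩ := hQ3
    have hQe : Q = 1 + 3 * u := by linear_combination hu
    have h1QQ : (1 : ℤ_[3]) + Q + Q ^ 2 = 3 + (Q - 1) * (Q + 2) := by ring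
    -- decompose
    have key : (∑ i ∈ Finset.range (3 ^ (m + 2)), q ^ i) - 3 ^ (m + 2)
        = (S - 3 ^ (m + 1)) * (1 + Q + Q ^ 2)
          + 3 ^ (m + 1) * ((Q - 1) * (Q + 2)) := by
      rw [hsplit, h1QQ]
      ring
    rw [key]
    have d1 : (3 : ℤ_[3]) ^ (m + 1 + 3) ∣ (S - 3 ^ (m + 1)) * (1 + Q + Q ^ 2) := by
      have hd3 : (3 : ℤ_[3]) ∣ 1 + Q + Q ^ 2 := by
        refine ⟨1 + 3 * u + 3 * u ^ 2, ?_⟩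
        rw [hQe]; ring
      have := mul_dvd_mul ih hd3
      rwa [← pow_succ] at this
    have d2 : (3 : ℤ_[3]) ^ (m + 1 + 3) ∣ 3 ^ (m + 1) * ((Q - 1) * (Q + 2)) := by
      have hQ2 : (3 : ℤ_[3]) ∣ Q + 2 := ⟨1 + u, by rw [hQe]; ring⟩
      have : (3 : ℤ_[3]) ^ (m + 1) * (3 ^ (m + 2) * 3)
          ∣ 3 ^ (m + 1) * ((Q - 1) * (Q + 2)) :=
        mul_dvd_mul_left _ (mul_dvd_mul hQ1 hQ2)
      refine dvd_trans ?_ this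
      have heq : (3 : ℤ_[3]) ^ (m + 1) * (3 ^ (m + 2) * 3) = 3 ^ ((m + 1) + (m + 2) + 1) := by
        ring
      rw [heq]
      exact pow_dvd_pow 3 (by omega)
    exact dvd_add d1 d2

/-- For natural multiples. -/
private lemma nat_case (q : ℤ_[3]) (hq : (9 : ℤ_[3]) ∣ q - 7) (n : ℕ) (hn : 3 ≤ n) (k : ℕ) :
    (3 : ℤ_[3]) ^ n ∣ (∑ i ∈ Finset.range (k * 3 ^ (n - 2)), q ^ i) - (k : ℤ_[3]) * 3 ^ (n - 2) := by
  obtain ⟨m, hm⟩ : ∃ m, n = m + 3 := ⟨n - 3, by omega⟩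
  subst hm
  have hexp : m + 3 - 2 = m + 1 := by omega
  rw [hexp]
  have h1 : (3 : ℤ_[3]) ∣ q - 1 := by
    obtain ⟨a, ha⟩ := hq
    exact ⟨2 + 3 * a, by linear_combination ha⟩
  induction k with
  | zero => simp
  | succ k ih =>
    have hstep : (k + 1) * 3 ^ (m + 1) = k * 3 ^ (m + 1) + 3 ^ (m + 1) := by ring
    rw [hstep, geom_sum_range_add]
    set a := k * 3 ^ (m + 1) with hA
    set S := ∑ i ∈ Finset.range (3 ^ (m + 1)), q ^ i with hS
    have key : (∑ i ∈ Finset.range a, q ^ i) + q ^ a * S - ((k : ℤ_[3]) + 1) * 3 ^ (m + 1)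
        = ((∑ i ∈ Finset.range a, q ^ i) - (k : ℤ_[3]) * 3 ^ (m + 1))
          + (q ^ a - 1) * S + (S - 3 ^ (m + 1)) := by ring
    have hc : (((k + 1 : ℕ)) : ℤ_[3]) = (k : ℤ_[3]) + 1 := by push_cast; ring
    rw [hc, key]
    refine dvd_add (dvd_add ih ?_) (core_lemma q hq m)
    -- (q^a - 1) * S
    have hqa1 : (3 : ℤ_[3]) ^ (m + 2) ∣ q ^ a - 1 := by
      have hp : q ^ a = (q ^ (3 ^ (m + 1))) ^ k := by rw [← pow_mul, hA, Nat.mul_comm]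
      have hQ1 : (3 : ℤ_[3]) ^ (m + 2) ∣ q ^ (3 ^ (m + 1)) - 1 := pow_three_dvd q h1 (m + 1)
      obtain ⟨u, hu⟩ := hQ1
      have hQe : q ^ (3 ^ (m + 1)) = 1 + 3 ^ (m + 2) * u := by linear_combination hu
      rw [hp, hQe]
      have : ∀ j : ℕ, (3 : ℤ_[3]) ^ (m + 2) ∣ (1 + 3 ^ (m + 2) * u) ^ j - 1 := by
        intro j
        induction j with
        | zero => simp
        | succ j ihj =>
          have : (1 + (3:ℤ_[3]) ^ (m + 2) * u) ^ (j + 1) - 1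
              = ((1 + 3 ^ (m + 2) * u) ^ j - 1) * (1 + 3 ^ (m + 2) * u)
                + 3 ^ (m + 2) * u := by ring
          rw [this]
          exact dvd_add (Dvd.dvd.mul_right ihj _) ⟨u, rfl⟩
      exact this k
    have hS3 : (3 : ℤ_[3]) ∣ S := by
      have h1' : (3 : ℤ_[3]) ∣ (3 : ℤ_[3]) ^ (m + 1) :=
        dvd_pow_self 3 (Nat.succ_ne_zero m)
      have h2' : (3 : ℤ_[3]) ∣ S - 3 ^ (m + 1) :=
        dvd_trans (dvd_pow_self 3 (by omega : m + 3 ≠ 0)) (core_lemma q hq m)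
      have := dvd_add h2' h1'
      simpa using this
    have := mul_dvd_mul hqa1 hS3
    rwa [← pow_succ] at this

/-- For `n ≥ 3` and `q ≡ 7 (mod 9)` in `ℤ_3`: `ι_q(c·3^{n−2}) ≡ c·3^{n−2} (mod 3^n)`
for every `c ∈ ℤ_3`. -/
theorem fixed_points_seven (n : ℕ) (hn : 3 ≤ n)
    (q : ℤ_[3]) (hq : (9 : ℤ_[3]) ∣ q - 7)
    (ι : ℤ_[3] → ℤ_[3]) (hcont : Continuous ι)
    (hval : ∀ k : ℕ, ι k = ∑ i ∈ Finset.range k, q ^ i)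
    (c : ℤ_[3]) :
    (3 : ℤ_[3]) ^ n ∣ ι (c * 3 ^ (n - 2)) - c * 3 ^ (n - 2) := by
  -- The set of `c` satisfying the conclusion is closed; naturals are dense.
  set s : Set ℤ_[3] :=
    {c | ‖ι (c * 3 ^ (n - 2)) - c * 3 ^ (n - 2)‖ ≤ (3 : ℝ) ^ (-(n : ℤ))} with hs
  have hdvd_iff : ∀ x : ℤ_[3], ‖x‖ ≤ (3 : ℝ) ^ (-(n : ℤ)) ↔ (3 : ℤ_[3]) ^ n ∣ x := by
    intro x
    have h3 : (((3 : ℕ)) : ℤ_[3]) = 3 := by norm_num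
    rw [show ((3 : ℝ) ^ (-(n : ℤ))) = ((3 : ℕ) : ℝ) ^ (-(n : ℤ)) by norm_num,
      PadicInt.norm_le_pow_iff_mem_span_pow, Ideal.mem_span_singleton, h3]
  have hclosed : IsClosed s := by
    have hcf : Continuous fun c : ℤ_[3] => ι (c * 3 ^ (n - 2)) - c * 3 ^ (n - 2) := by
      fun_prop
    exact isClosed_le (by fun_prop) continuous_const
  have hsub : Set.range (Nat.cast : ℕ → ℤ_[3]) ⊆ s := by
    rintro _ ⟨k, rfl⟩
    show ‖ι ((k : ℤ_[3]) * 3 ^ (n - 2)) - (k : ℤ_[3]) * 3 ^ (n - 2)‖ ≤ _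
    rw [hdvd_iff]
    have hcast : (k : ℤ_[3]) * 3 ^ (n - 2) = ((k * 3 ^ (n - 2) : ℕ) : ℤ_[3]) := by
      push_cast; ring
    rw [hcast, hval]
    rw [← hcast]
    exact nat_case q hq n hn k
  have : c ∈ s := by
    have := hclosed.closure_subset_iff.mpr hsub
    rw [PadicInt.denseRange_natCast.closure_range] at this
    exact this (Set.mem_univ c)
  exact (hdvd_iff _).mp this
end

section
/- Let n ≥ 3 and q ∈ ℤ_3 with q ≡ 4 (mod 9). Then for every c ∈ ℤ_3, ι_q(1 + c·3^{n−2}) ≡ 1 + c·3^{n−2} (mod 3^n). -/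
private lemma pow3_dvd (q : ℤ_[3]) (h3 : (3:ℤ_[3]) ∣ q - 1) :
    ∀ m : ℕ, ∃ b : ℤ_[3], q ^ (3^m) = 1 + 3^(m+1) * b := by
  intro m
  induction m with
  | zero =>
    obtain ⟨b, hb⟩ := h3
    refine ⟨b, ?_⟩
    norm_num
    linear_combination hb
  | succ m ih =>
    obtain ⟨b, hb⟩ := ih
    refine ⟨b + 3^(m+1)*b^2 + 3^(2*m+1)*b^3, ?_⟩
    have hx : q ^ (3^(m+1)) = (q ^ (3^m))^3 := by rw [← pow_mul, pow_succ]
    rw [hx, hb]; ring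

private lemma lemA (q : ℤ_[3]) (t : ℤ_[3]) (hq4 : q = 4 + 9*t) :
    ∀ e : ℕ, ∃ w : ℤ_[3], q*(q^(3^(e+1)) - 1) - 3^(e+1)*(q-1) = 3^(e+4) * w := by
  subst hq4
  have h3 : (3:ℤ_[3]) ∣ (4+9*t) - 1 := ⟨1 + 3*t, by ring⟩
  intro e
  induction e with
  | zero =>
    refine ⟨(1+3*t)^2*(3+10*t+9*t^2), ?_⟩
    norm_num
    ring
  | succ e ih =>
    obtain ⟨s, hs⟩ := ih
    obtain ⟨b, hb⟩ := pow3_dvd _ h3 (e+1)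
    refine ⟨(1 + 3^(e+2)*b)*s + 3^(2*e+1)*(4+9*t)*b^3 + 3^e*(1+3*t)*b, ?_⟩
    have hx : (4+9*t) ^ (3^(e+1+1)) = ((4+9*t) ^ (3^(e+1)))^3 := by
      rw [← pow_mul, pow_succ]
    rw [hb] at hs
    rw [hx, hb]
    linear_combination (3*(1 + 3^(e+2)*b))*hs

private lemma mainNat (q : ℤ_[3]) (t : ℤ_[3]) (hq4 : q = 4 + 9*t) (e : ℕ) :
    ∀ m : ℕ, ∃ a : ℤ_[3],
      q^(1+m*3^(e+1)) - 1 - (1 + (m:ℤ_[3])*3^(e+1))*(q-1) = 3^(e+4) * a := by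
  subst hq4
  have h3 : (3:ℤ_[3]) ∣ (4+9*t) - 1 := ⟨1 + 3*t, by ring⟩
  intro m
  induction m with
  | zero => exact ⟨0, by push_cast; ring⟩
  | succ m ih =>
    obtain ⟨a, ha⟩ := ih
    obtain ⟨w, hw⟩ := lemA _ t rfl e
    obtain ⟨b, hb⟩ := pow3_dvd _ h3 (e+1)
    refine ⟨(1 + 3^(e+2)*b)*a + w + 3^e*(m:ℤ_[3])*(1+3*t)*b, ?_⟩
    have hsplit : 1+(m+1)*3^(e+1) = (1+m*3^(e+1)) + 3^(e+1) := by ring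
    rw [hb] at hw
    rw [hsplit, pow_add, hb]
    push_cast
    linear_combination (1 + 3^(e+2)*b)*ha + hw


private lemma sumNat (q t : ℤ_[3]) (hq4 : q = 4 + 9*t) (e m : ℕ) :
    (3:ℤ_[3])^(e+3) ∣ (∑ i ∈ Finset.range (1+m*3^(e+1)), q^i) - (1 + (m:ℤ_[3])*3^(e+1)) := by
  obtain ⟨a, ha⟩ := mainNat q t hq4 e m
  have hg : (∑ i ∈ Finset.range (1+m*3^(e+1)), q^i) * (q-1) = q^(1+m*3^(e+1)) - 1 :=
    geom_sum_mul q _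
  set S := ∑ i ∈ Finset.range (1+m*3^(e+1)), q^i with hS
  set K : ℤ_[3] := 1 + (m:ℤ_[3])*3^(e+1) with hK
  have h1 : (3:ℤ_[3]) * ((1+3*t) * (S - K)) = 3 * (3^(e+3) * a) := by
    rw [hq4] at hg ha
    linear_combination hg + ha
  have h2 : (1+3*t) * (S - K) = 3^(e+3) * a :=
    mul_left_cancel₀ (by norm_num : (3:ℤ_[3]) ≠ 0) h1
  have hu : IsUnit ((1:ℤ_[3])+3*t) := by
    rw [PadicInt.isUnit_iff]
    refine le_antisymm (PadicInt.norm_le_one _) ?_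
    by_contra h
    push_neg at h
    have h3 : ((3:ℕ):ℤ_[3]) ∣ (1+3*t) := (PadicInt.norm_lt_one_iff_dvd _).mp h
    obtain ⟨c, hc⟩ := h3
    have hone : ‖(1:ℤ_[3])‖ < 1 := by
      rw [PadicInt.norm_lt_one_iff_dvd]
      exact ⟨c - t, by push_cast at hc ⊢; linear_combination hc⟩
    simp at hone
  exact (IsUnit.dvd_mul_left hu).mp ⟨a, h2⟩

/-- For `n ≥ 3` and `q ≡ 4 (mod 9)` in `ℤ_3`:
`ι_q(1 + c·3^{n−2}) ≡ 1 + c·3^{n−2} (mod 3^n)` for every `c ∈ ℤ_3`. -/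
theorem fixed_points_four (n : ℕ) (hn : 3 ≤ n)
    (q : ℤ_[3]) (hq : (9 : ℤ_[3]) ∣ q - 4)
    (ι : ℤ_[3] → ℤ_[3]) (hcont : Continuous ι)
    (hval : ∀ k : ℕ, ι k = ∑ i ∈ Finset.range k, q ^ i)
    (c : ℤ_[3]) :
    (3 : ℤ_[3]) ^ n ∣ ι (1 + c * 3 ^ (n - 2)) - (1 + c * 3 ^ (n - 2)) := by
  obtain ⟨t, ht⟩ := hq
  have hq4 : q = 4 + 9*t := by linear_combination ht
  obtain ⟨e, rfl⟩ : ∃ e, n = e + 3 := ⟨n-3, by omega⟩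
  simp only [show e+3-2 = e+1 from rfl]
  have hchar : ∀ z : ℤ_[3], ‖z‖ ≤ ((3:ℕ):ℝ)^(-((e+3:ℕ)):ℤ) ↔ (3:ℤ_[3])^(e+3) ∣ z := by
    intro z
    rw [show ((3:ℤ_[3]))^(e+3) = ((3:ℕ):ℤ_[3])^(e+3) by norm_num]
    rw [← Ideal.mem_span_singleton (α := ℤ_[3])]
    exact PadicInt.norm_le_pow_iff_mem_span_pow z (e+3)
  have key : ∀ m : ℕ,
      (3:ℤ_[3])^(e+3) ∣ ι (1 + (m:ℤ_[3]) * 3^(e+1)) - (1 + (m:ℤ_[3]) * 3^(e+1)) := by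
    intro m
    have hcast : ((1:ℤ_[3]) + (m:ℤ_[3]) * 3^(e+1)) = ((1 + m*3^(e+1) : ℕ) : ℤ_[3]) := by
      push_cast; ring
    rw [hcast, hval]
    have h := sumNat q t hq4 e m
    have hcast2 : ((1 + m*3^(e+1) : ℕ) : ℤ_[3]) = 1 + (m:ℤ_[3])*3^(e+1) := by
      push_cast; ring
    rw [hcast2]
    exact h
  set g : ℤ_[3] → ℤ_[3] := fun x => ι (1 + x * 3^(e+1)) - (1 + x * 3^(e+1)) with hgdef
  have hgc : Continuous g := by
    apply Continuous.sub
    · exact hcont.comp (by continuity)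
    · continuity
  have hclosed : IsClosed {x : ℤ_[3] | ‖g x‖ ≤ ((3:ℕ):ℝ)^(-((e+3:ℕ)):ℤ)} :=
    isClosed_le (continuous_norm.comp hgc) continuous_const
  have hsub : Set.range (Nat.cast : ℕ → ℤ_[3]) ⊆ {x : ℤ_[3] | ‖g x‖ ≤ ((3:ℕ):ℝ)^(-((e+3:ℕ)):ℤ)} := by
    rintro _ ⟨m, rfl⟩
    exact (hchar _).mpr (key m)
  have hc : c ∈ {x : ℤ_[3] | ‖g x‖ ≤ ((3:ℕ):ℝ)^(-((e+3:ℕ)):ℤ)} :=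
    closure_minimal hsub hclosed (PadicInt.denseRange_natCast c)
  exact (hchar _).mp hc
end

section
/- Let n ≥ 3, q ∈ 1 + 3ℤ_3 with q ≢ 1 (mod 9), and let a_0 ∈ 3ℤ_3, a_0 ≠ 0, with v = v_3(a_0). Suppose ι_q(a_0) ≡ a_0 (mod 3^n). Then for c ∈ ℤ_3, ι_q(c·a_0) ≡ c·a_0 (mod 3^n) if and only if c(c−1) ∈ 3^{n−2v−1}ℤ_3. -/
open Finset

private lemma aux_pow_bound : ∀ i : ℕ, 1 ≤ i → i + 2 ≤ 3 ^ (2 * i - 1) := by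
  intro i hi
  induction i with
  | zero => omega
  | succ j ih =>
    rcases Nat.eq_or_lt_of_le hi with h | h
    · have : j = 0 := by omega
      subst this; norm_num
    · have hj : 1 ≤ j := by omega
      have hb := ih hj
      have h2 : 2 * (j + 1) - 1 = (2 * j - 1) + 2 := by omega
      rw [h2, pow_add]
      nlinarith [hb]

private lemma aux_e : ∀ i : ℕ, 1 ≤ i → padicValNat 3 ((i + 1) * (i + 2)) ≤ 2 * i - 1 := by
  intro i hi
  have hmul : padicValNat 3 ((i + 1) * (i + 2)) =
      padicValNat 3 (i + 1) + padicValNat 3 (i + 2) := padicValNat.mul (by omega) (by omega)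
  have key : 3 ^ padicValNat 3 ((i + 1) * (i + 2)) ≤ i + 2 := by
    by_cases hd : 3 ∣ (i + 1)
    · have hnd : ¬ 3 ∣ (i + 2) := by omega
      rw [hmul, padicValNat.eq_zero_of_not_dvd hnd, add_zero]
      calc 3 ^ padicValNat 3 (i + 1) ≤ i + 1 :=
            Nat.le_of_dvd (by omega) pow_padicValNat_dvd
        _ ≤ i + 2 := by omega
    · rw [hmul, padicValNat.eq_zero_of_not_dvd hd, zero_add]
      exact Nat.le_of_dvd (by omega) pow_padicValNat_dvd
  have h3e : 3 ^ padicValNat 3 ((i + 1) * (i + 2)) ≤ 3 ^ (2 * i - 1) :=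
    le_trans key (aux_pow_bound i hi)
  exact (Nat.pow_le_pow_iff_right (by norm_num)).mp h3e

private lemma aux_choose : ∀ k i : ℕ,
    (i + 1) * (i + 2) * Nat.choose k (i + 2) = k * (k - 1) * Nat.choose (k - 2) i := by
  intro k i
  match k with
  | 0 => simp [Nat.choose_eq_zero_of_lt (by omega : 0 < i + 2)]
  | 1 => simp [Nat.choose_eq_zero_of_lt (by omega : 1 < i + 2)]
  | (m + 2) =>
    have h1 := Nat.add_one_mul_choose_eq (m + 1) (i + 1)
    have h2 := Nat.add_one_mul_choose_eq m i
    show (i + 1) * (i + 2) * Nat.choose (m + 2) (i + 2) = (m + 2) * (m + 1) * Nat.choose m i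
    calc (i + 1) * (i + 2) * Nat.choose (m + 2) (i + 2)
        = (i + 1) * (Nat.choose (m + 2) (i + 2) * (i + 2)) := by ring
      _ = (i + 1) * ((m + 2) * Nat.choose (m + 1) (i + 1)) := by rw [← h1]
      _ = (m + 2) * (Nat.choose (m + 1) (i + 1) * (i + 1)) := by ring
      _ = (m + 2) * ((m + 1) * Nat.choose m i) := by rw [← h2]
      _ = (m + 2) * (m + 1) * Nat.choose m i := by ring

private lemma aux_choose2 : ∀ k : ℕ, k * (k - 1) = 2 * Nat.choose k 2 := by
  intro k
  match k with
  | 0 => simp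
  | (m + 1) =>
    have h := Nat.add_one_mul_choose_eq m 1
    simp only [Nat.succ_eq_add_one, Nat.choose_one_right] at h
    show (m + 1) * m = 2 * Nat.choose (m + 1) 2
    norm_num at h
    omega

private lemma castc (k i : ℕ) :
    (((i : ℤ_[3]) + 1) * ((i : ℤ_[3]) + 2)) * (Nat.choose k (i + 2) : ℤ_[3]) =
      (k : ℤ_[3]) * ((k : ℤ_[3]) - 1) * (Nat.choose (k - 2) i : ℤ_[3]) := by
  rcases k with _ | m
  · simp [Nat.choose_eq_zero_of_lt (by omega : 0 < i + 2)]
  · have h := aux_choose (m + 1) i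
    have hc : ((((i + 1) * (i + 2) * Nat.choose (m + 1) (i + 2) : ℕ)) : ℤ_[3]) =
        (((m + 1) * ((m + 1) - 1) * Nat.choose ((m + 1) - 2) i : ℕ) : ℤ_[3]) := by rw [h]
    push_cast [Nat.succ_sub_one] at hc
    push_cast
    convert hc using 1 <;> ring

private lemma castc2 (k : ℕ) :
    (k : ℤ_[3]) * ((k : ℤ_[3]) - 1) = 2 * (Nat.choose k 2 : ℤ_[3]) := by
  rcases k with _ | m
  · simp
  · have h := aux_choose2 (m + 1)
    have hc : (((m + 1) * ((m + 1) - 1) : ℕ) : ℤ_[3]) = ((2 * Nat.choose (m + 1) 2 : ℕ) : ℤ_[3]) := by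
      rw [h]
    push_cast [Nat.succ_sub_one] at hc
    push_cast
    convert hc using 1 <;> ring

/-- For `n ≥ 3`, `q ∈ 1 + 3ℤ_3` with `q ≢ 1 (mod 9)`, `a₀ ∈ 3ℤ_3`, `a₀ ≠ 0`,
`v = v_3(a₀)`: if `ι_q(a₀) ≡ a₀ (mod 3^n)`, then for `c ∈ ℤ_3`,
`ι_q(c·a₀) ≡ c·a₀ (mod 3^n)` iff `c(c−1) ∈ 3^{n−2v−1}ℤ_3`. -/
theorem fixed_point_multiples (n : ℕ) (hn : 3 ≤ n)
    (q : ℤ_[3]) (hq1 : (3 : ℤ_[3]) ∣ q - 1) (hq9 : ¬ (9 : ℤ_[3]) ∣ q - 1)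
    (ι : ℤ_[3] → ℤ_[3]) (hcont : Continuous ι)
    (hval : ∀ k : ℕ, ι k = ∑ i ∈ Finset.range k, q ^ i)
    (a₀ : ℤ_[3]) (ha₀ : a₀ ≠ 0) (h3 : (3 : ℤ_[3]) ∣ a₀)
    (v : ℕ) (hv : a₀.valuation = (v : ℤ))
    (hfix : (3 : ℤ_[3]) ^ n ∣ ι a₀ - a₀) (c : ℤ_[3]) :
    (3 : ℤ_[3]) ^ n ∣ ι (c * a₀) - c * a₀ ↔
      (3 : ℤ_[3]) ^ (n - 2 * v - 1) ∣ c * (c - 1) := by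
  have hp3 : ((3 : ℕ) : ℤ_[3]) = (3 : ℤ_[3]) := by norm_num
  have hprime : Prime (3 : ℤ_[3]) := by
    have := PadicInt.prime_p (p := 3); rwa [hp3] at this
  have h3ne : (3 : ℤ_[3]) ≠ 0 := hprime.ne_zero
  have hq0 : q - 1 ≠ 0 := fun h => hq9 (h ▸ dvd_zero 9)
  -- dvd ↔ norm bound
  have hdvd_iff : ∀ (x : ℤ_[3]) (m : ℕ),
      (3 : ℤ_[3]) ^ m ∣ x ↔ ‖x‖ ≤ (3 : ℝ) ^ (-(m : ℤ)) := by
    intro x m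
    have h := PadicInt.norm_le_pow_iff_mem_span_pow x m
    rw [Ideal.mem_span_singleton] at h
    rw [hp3] at h
    have : ((3 : ℕ) : ℝ) = (3 : ℝ) := by norm_num
    rw [this] at h
    exact h.symm
  -- valuation facts about a₀
  have hnorma : ‖a₀‖ = (3 : ℝ) ^ (-(v : ℤ)) := by
    have := PadicInt.norm_eq_zpow_neg_valuation ha₀
    rw [hv] at this
    rw [this]; norm_num
  have ha₀v : (3 : ℤ_[3]) ^ v ∣ a₀ := (hdvd_iff _ _).mpr (le_of_eq hnorma)
  have ha₀nv : ¬ (3 : ℤ_[3]) ^ (v + 1) ∣ a₀ := by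
    intro h
    have := (hdvd_iff _ _).mp h
    rw [hnorma] at this
    have h31 : (1 : ℝ) < 3 := by norm_num
    have := (zpow_le_zpow_iff_right₀ h31).mp this
    omega
  have hv1 : 1 ≤ v := by
    by_contra hv0
    have hv0' : v = 0 := by omega
    apply ha₀nv
    rw [hv0', pow_one]
    exact h3
  -- nat non-divisibility transfers
  have natdvd : ∀ m : ℕ, ¬ (3 ∣ m) → ¬ ((3 : ℤ_[3]) ∣ (m : ℤ_[3])) := by
    intro m hm hdvd
    have h1 : ((3 : ℕ) : ℤ_[3]) ^ 1 ∣ ((m : ℤ) : ℤ_[3]) := by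
      rw [hp3, pow_one]; push_cast; exact hdvd
    rw [PadicInt.pow_p_dvd_int_iff] at h1
    apply hm
    exact_mod_cast h1
  -- key identity
  have key : ∀ (k : ℕ) (x : ℤ_[3]),
      ι ((k : ℤ_[3]) * x) = ι x * ∑ j ∈ range k, (1 + (q - 1) * ι x) ^ j := by
    intro k
    have hg : Continuous fun x : ℤ_[3] => ι ((k : ℤ_[3]) * x) :=
      hcont.comp (continuous_const.mul continuous_id)
    have hh : Continuous fun x : ℤ_[3] =>
        ι x * ∑ j ∈ range k, (1 + (q - 1) * ι x) ^ j :=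
      hcont.mul (continuous_finset_sum _ fun j _ =>
        (continuous_const.add (continuous_const.mul hcont)).pow j)
    have H : (fun x : ℤ_[3] => ι ((k : ℤ_[3]) * x)) ∘ (Nat.cast : ℕ → ℤ_[3]) =
        (fun x : ℤ_[3] => ι x * ∑ j ∈ range k, (1 + (q - 1) * ι x) ^ j) ∘ Nat.cast := by
      funext m
      simp only [Function.comp_apply]
      have hqm : 1 + (q - 1) * ι (m : ℤ_[3]) = q ^ m := by
        rw [hval m, mul_comm, geom_sum_mul]; ring
      rw [hqm, hval m, ← Nat.cast_mul, hval (k * m)]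
      apply mul_left_cancel₀ hq0
      have e1 : (q - 1) * ∑ i ∈ range (k * m), q ^ i = q ^ (k * m) - 1 := by
        rw [mul_comm, geom_sum_mul]
      have e2 : (q - 1) * ((∑ i ∈ range m, q ^ i) * ∑ j ∈ range k, (q ^ m) ^ j)
          = q ^ (k * m) - 1 := by
        calc (q - 1) * ((∑ i ∈ range m, q ^ i) * ∑ j ∈ range k, (q ^ m) ^ j)
            = ((∑ i ∈ range m, q ^ i) * (q - 1)) * ∑ j ∈ range k, (q ^ m) ^ j := by ring
          _ = (q ^ m - 1) * ∑ j ∈ range k, (q ^ m) ^ j := by rw [geom_sum_mul]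
          _ = (∑ j ∈ range k, (q ^ m) ^ j) * (q ^ m - 1) := by ring
          _ = (q ^ m) ^ k - 1 := by rw [geom_sum_mul]
          _ = q ^ (k * m) - 1 := by rw [← pow_mul, mul_comm]
      rw [e1, e2]
    have := PadicInt.denseRange_natCast.equalizer hg hh H
    exact fun x => congrFun this x
  -- binomial expansion of geometric sums
  have hD : ∀ (T : ℤ_[3]) (k : ℕ),
      (∑ j ∈ range k, (1 + T) ^ j) - (k : ℤ_[3]) =
        ∑ i ∈ range (k - 1), ((Nat.choose k (i + 2) : ℕ) : ℤ_[3]) * T ^ (i + 1) := by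
    intro T k
    have hQ : ∑ j ∈ range k, (1 + T) ^ j
        = ∑ j ∈ range k, ((Nat.choose k (j + 1) : ℕ) : ℤ_[3]) * T ^ j := by
      by_cases hT0 : T = 0
      · rw [hT0]
        rcases k with _ | m
        · simp
        · rw [Finset.sum_range_succ', Finset.sum_range_succ']
          simp [Nat.choose_one_right]
      · apply mul_left_cancel₀ hT0
        have e1 : T * ∑ j ∈ range k, (1 + T) ^ j = (1 + T) ^ k - 1 := by
          have := geom_sum_mul (1 + T) k
          rw [mul_comm]
          simpa using this
        have e2 : T * ∑ j ∈ range k, ((Nat.choose k (j + 1) : ℕ) : ℤ_[3]) * T ^ j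
            = (1 + T) ^ k - 1 := by
          rw [add_comm (1 : ℤ_[3]) T, add_pow T 1 k, Finset.sum_range_succ']
          simp only [one_pow, mul_one, pow_zero, Nat.choose_zero_right, Nat.cast_one]
          rw [Finset.mul_sum]
          rw [add_sub_cancel_right]
          apply Finset.sum_congr rfl
          intro j _
          ring
        rw [e1, e2]
    rw [hQ]
    rcases k with _ | m
    · simp
    · rw [Finset.sum_range_succ']
      simp [Nat.choose_one_right]
  -- term bound
  have tb : ∀ (T : ℤ_[3]), (3 : ℤ_[3]) ^ (v + 1) ∣ T → ∀ (σ k i : ℕ), 1 ≤ i →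
      (3 : ℤ_[3]) ^ σ ∣ (k : ℤ_[3]) * ((k : ℤ_[3]) - 1) →
      (3 : ℤ_[3]) ^ (σ + v + 2) ∣ ((Nat.choose k (i + 2) : ℕ) : ℤ_[3]) * T ^ (i + 1) := by
    intro T hT σ k i hi hσ
    have he : padicValNat 3 ((i + 1) * (i + 2)) ≤ 2 * i - 1 := aux_e i hi
    set e := padicValNat 3 ((i + 1) * (i + 2)) with he_def
    obtain ⟨m, hm⟩ : (3 : ℕ) ^ e ∣ (i + 1) * (i + 2) := pow_padicValNat_dvd
    have h3m : ¬ (3 : ℕ) ∣ m := by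
      intro h3m
      obtain ⟨w, hw⟩ := h3m
      have : (3 : ℕ) ^ (e + 1) ∣ (i + 1) * (i + 2) := ⟨w, by rw [hm, hw]; ring⟩
      exact pow_succ_padicValNat_not_dvd (by positivity) this
    -- the inequality
    have hkey : (i + 1) * (v + 1) ≥ v + 2 + (2 * i - 1) := by
      have h2i : v + 2 + (2 * i - 1) = v + 1 + 2 * i := by omega
      have : (i + 1) * (v + 1) ≥ v + 1 + 2 * i := by nlinarith
      omega
    have hineq : σ + (i + 1) * (v + 1) ≥ e + (σ + v + 2) := by omega
    -- divisibility of the big product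
    have h1 : (3 : ℤ_[3]) ^ (σ + (i + 1) * (v + 1)) ∣
        (k : ℤ_[3]) * ((k : ℤ_[3]) - 1) * ((Nat.choose (k - 2) i : ℕ) : ℤ_[3]) * T ^ (i + 1) := by
      rw [pow_add]
      have hTpow : (3 : ℤ_[3]) ^ ((i + 1) * (v + 1)) ∣ T ^ (i + 1) := by
        rw [mul_comm (i+1) (v+1), pow_mul]
        exact pow_dvd_pow_of_dvd hT (i + 1)
      exact mul_dvd_mul (hσ.mul_right _) hTpow
    have h2 : (k : ℤ_[3]) * ((k : ℤ_[3]) - 1) * ((Nat.choose (k - 2) i : ℕ) : ℤ_[3]) * T ^ (i + 1)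
        = (3 : ℤ_[3]) ^ e * ((m : ℤ_[3]) * (((Nat.choose k (i + 2) : ℕ) : ℤ_[3]) * T ^ (i + 1))) := by
      rw [← castc k i]
      have hmc : (((i : ℤ_[3]) + 1) * ((i : ℤ_[3]) + 2)) = (3 : ℤ_[3]) ^ e * (m : ℤ_[3]) := by
        have : (((i + 1) * (i + 2) : ℕ) : ℤ_[3]) = (((3 : ℕ) ^ e * m : ℕ) : ℤ_[3]) := by rw [hm]
        push_cast at this
        convert this using 2 <;> norm_num
      rw [hmc]; ring
    rw [h2] at h1
    have h3 : (3 : ℤ_[3]) ^ (σ + v + 2) ∣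
        (m : ℤ_[3]) * (((Nat.choose k (i + 2) : ℕ) : ℤ_[3]) * T ^ (i + 1)) := by
      obtain ⟨d, hd⟩ : ∃ d : ℕ, σ + (i + 1) * (v + 1) = e + ((σ + v + 2) + d) :=
        ⟨σ + (i + 1) * (v + 1) - e - (σ + v + 2), by omega⟩
      rw [hd, pow_add] at h1
      have h1' := (mul_dvd_mul_iff_left (pow_ne_zero e h3ne)).mp h1
      exact dvd_trans (pow_dvd_pow _ (Nat.le_add_right _ _)) h1'
    exact hprime.pow_dvd_of_dvd_mul_left _ (natdvd m h3m) h3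
  have H : ∀ k : ℕ, ((3 : ℤ_[3]) ^ n ∣ ι ((k : ℤ_[3]) * a₀) - (k : ℤ_[3]) * a₀ ↔
      (3 : ℤ_[3]) ^ (n - 2 * v - 1) ∣ (k : ℤ_[3]) * ((k : ℤ_[3]) - 1)) := by
    have h2not : ¬ (3 : ℤ_[3]) ∣ (2 : ℤ_[3]) := by
      have := natdvd 2 (by norm_num)
      simpa using this
    intro k
    have hsplit : ι ((k : ℤ_[3]) * a₀) - (k : ℤ_[3]) * a₀ =
        ι a₀ * ((∑ j ∈ range k, (1 + (q - 1) * ι a₀) ^ j) - (k : ℤ_[3])) +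
          (k : ℤ_[3]) * (ι a₀ - a₀) := by
      rw [key k a₀]; ring
    have hiff1 : (3 : ℤ_[3]) ^ n ∣ ι ((k : ℤ_[3]) * a₀) - (k : ℤ_[3]) * a₀ ↔
        (3 : ℤ_[3]) ^ n ∣ ι a₀ * ((∑ j ∈ range k, (1 + (q - 1) * ι a₀) ^ j) - (k : ℤ_[3])) := by
      rw [hsplit]
      constructor
      · intro h
        simpa using h.sub (hfix.mul_left (k : ℤ_[3]))
      · intro h
        exact h.add (hfix.mul_left (k : ℤ_[3]))
    rw [hiff1, hD ((q - 1) * ι a₀) k]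
    by_cases hbig : 2 * v + 2 ≤ n
    · -- main case
      have hiav : (3 : ℤ_[3]) ^ v ∣ ι a₀ := by
        have h1 : (3 : ℤ_[3]) ^ v ∣ ι a₀ - a₀ :=
          dvd_trans (pow_dvd_pow _ (by omega : v ≤ n)) hfix
        simpa using h1.add ha₀v
      have hianv : ¬ (3 : ℤ_[3]) ^ (v + 1) ∣ ι a₀ := by
        intro h
        apply ha₀nv
        have h1 : (3 : ℤ_[3]) ^ (v + 1) ∣ ι a₀ - a₀ :=
          dvd_trans (pow_dvd_pow _ (by omega : v + 1 ≤ n)) hfix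
        simpa using h.sub h1
      obtain ⟨A, hA⟩ := hiav
      have hA3 : ¬ (3 : ℤ_[3]) ∣ A := by
        rintro ⟨B, hB⟩
        exact hianv ⟨B, by rw [hA, hB]; ring⟩
      obtain ⟨u, hu⟩ := hq1
      have hu3 : ¬ (3 : ℤ_[3]) ∣ u := by
        rintro ⟨w, hw⟩
        exact hq9 ⟨w, by rw [hu, hw]; norm_num; ring⟩
      have hText : (q - 1) * ι a₀ = (3 : ℤ_[3]) ^ (v + 1) * (u * A) := by
        rw [hu, hA]; ring
      have hTdvd : (3 : ℤ_[3]) ^ (v + 1) ∣ (q - 1) * ι a₀ := ⟨u * A, hText⟩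
      have hBnot : ¬ (3 : ℤ_[3]) ∣ u * A := by
        intro h
        rcases hprime.dvd_mul.mp h with h' | h'
        exacts [hu3 h', hA3 h']
      set s := n - 2 * v - 1 with hs_def
      have hs1 : 1 ≤ s := by omega
      have hnv : n - v = s + (v + 1) := by omega
      -- step 2 : divide out ι a₀
      have hiff2 : (3 : ℤ_[3]) ^ n ∣
          ι a₀ * (∑ i ∈ range (k - 1), ((Nat.choose k (i + 2) : ℕ) : ℤ_[3]) *
            ((q - 1) * ι a₀) ^ (i + 1)) ↔
          (3 : ℤ_[3]) ^ (n - v) ∣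
            ∑ i ∈ range (k - 1), ((Nat.choose k (i + 2) : ℕ) : ℤ_[3]) *
              ((q - 1) * ι a₀) ^ (i + 1) := by
        set X := ∑ i ∈ range (k - 1), ((Nat.choose k (i + 2) : ℕ) : ℤ_[3]) *
            ((q - 1) * ι a₀) ^ (i + 1) with hX
        constructor
        · intro h
          rw [hA] at h
          have hn' : n = v + (n - v) := by omega
          rw [hn', pow_add] at h
          have h' : (3 : ℤ_[3]) ^ v * (3 : ℤ_[3]) ^ (n - v) ∣ (3 : ℤ_[3]) ^ v * (A * X) := by
            convert h using 1; ring
          have := (mul_dvd_mul_iff_left (pow_ne_zero v h3ne)).mp h'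
          exact hprime.pow_dvd_of_dvd_mul_left _ hA3 this
        · intro h
          have hn' : n = v + (n - v) := by omega
          rw [hn', pow_add, hA]
          have : (3 : ℤ_[3]) ^ v * A * X = (3:ℤ_[3])^v * (A * X) := by ring
          rw [this]
          exact mul_dvd_mul_left _ (dvd_mul_of_dvd_right h A)
      rw [hiff2]
      constructor
      · -- ⇒ : contrapositive
        intro hDdvd
        by_contra hns
        have hk2 : 2 ≤ k := by
          rcases k with _ | _ | k
          · exfalso; apply hns; simp
          · exfalso; apply hns; simp
          · omega
        have hK0 : k * (k - 1) ≠ 0 := by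
          have : 1 ≤ k - 1 := by omega
          positivity
        set t := padicValNat 3 (k * (k - 1)) with ht_def
        obtain ⟨M, hM⟩ : (3 : ℕ) ^ t ∣ k * (k - 1) := pow_padicValNat_dvd
        have hM3 : ¬ (3 : ℕ) ∣ M := by
          intro h3m
          obtain ⟨w, hw⟩ := h3m
          have : (3 : ℕ) ^ (t + 1) ∣ k * (k - 1) := ⟨w, by rw [hM, hw]; ring⟩
          exact pow_succ_padicValNat_not_dvd hK0 this
        have hcastK : ((k * (k - 1) : ℕ) : ℤ_[3]) = (k : ℤ_[3]) * ((k : ℤ_[3]) - 1) := by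
          have h1 : ((k - 1 : ℕ) : ℤ_[3]) = (k : ℤ_[3]) - 1 := by
            have : (1:ℕ) ≤ k := by omega
            push_cast [this]
            ring
          push_cast [h1]
          ring
        have hKdvd : (3 : ℤ_[3]) ^ t ∣ (k : ℤ_[3]) * ((k : ℤ_[3]) - 1) := by
          rw [← hcastK]
          have : ((3:ℕ)^t : ℤ_[3]) ∣ ((k * (k-1) : ℕ) : ℤ_[3]) := by
            exact_mod_cast Nat.cast_dvd_cast ⟨M, hM⟩
          simpa using this
        have htlt : t < s := by
          by_contra hts
          exact hns (dvd_trans (pow_dvd_pow _ (by omega : s ≤ t)) hKdvd)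
        -- the sum splits : first term + rest
        have hsum : ∑ i ∈ range (k - 1), ((Nat.choose k (i + 2) : ℕ) : ℤ_[3]) *
              ((q - 1) * ι a₀) ^ (i + 1)
            = (∑ i ∈ range (k - 2), ((Nat.choose k (i + 1 + 2) : ℕ) : ℤ_[3]) *
              ((q - 1) * ι a₀) ^ (i + 1 + 1)) +
              ((Nat.choose k 2 : ℕ) : ℤ_[3]) * ((q - 1) * ι a₀) ^ 1 := by
          have hk1 : k - 1 = (k - 2) + 1 := by omega
          rw [hk1, Finset.sum_range_succ']
        have hrest : (3 : ℤ_[3]) ^ (t + v + 2) ∣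
            ∑ i ∈ range (k - 2), ((Nat.choose k (i + 1 + 2) : ℕ) : ℤ_[3]) *
              ((q - 1) * ι a₀) ^ (i + 1 + 1) := by
          apply Finset.dvd_sum
          intro i _
          exact tb _ hTdvd t k (i + 1) (by omega) hKdvd
        have hfirst : ¬ (3 : ℤ_[3]) ^ (t + v + 2) ∣
            ((Nat.choose k 2 : ℕ) : ℤ_[3]) * ((q - 1) * ι a₀) ^ 1 := by
          intro hcon
          have h2 : (3 : ℤ_[3]) ^ (t + v + 2) ∣
              (2 : ℤ_[3]) * (((Nat.choose k 2 : ℕ) : ℤ_[3]) * ((q - 1) * ι a₀) ^ 1) :=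
            hcon.mul_left 2
          have heq : (2 : ℤ_[3]) * (((Nat.choose k 2 : ℕ) : ℤ_[3]) * ((q - 1) * ι a₀) ^ 1)
              = (3 : ℤ_[3]) ^ (t + v + 1) * ((M : ℤ_[3]) * (u * A)) := by
            rw [pow_one, hText, ← mul_assoc, ← castc2 k, ← hcastK, hM]
            push_cast
            ring
          rw [heq] at h2
          have h2' : (3 : ℤ_[3]) ^ (t + v + 1) * (3 : ℤ_[3]) ∣
              (3 : ℤ_[3]) ^ (t + v + 1) * ((M : ℤ_[3]) * (u * A)) := by
            rwa [← pow_succ]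
          have h3' := (mul_dvd_mul_iff_left (pow_ne_zero (t + v + 1) h3ne)).mp h2'
          rcases hprime.dvd_mul.mp h3' with h' | h'
          exacts [natdvd M hM3 h', hBnot h']
        apply hfirst
        have hDdvd' : (3 : ℤ_[3]) ^ (t + v + 2) ∣
            (∑ i ∈ range (k - 2), ((Nat.choose k (i + 1 + 2) : ℕ) : ℤ_[3]) *
              ((q - 1) * ι a₀) ^ (i + 1 + 1)) +
              ((Nat.choose k 2 : ℕ) : ℤ_[3]) * ((q - 1) * ι a₀) ^ 1 := by
          rw [← hsum]
          exact dvd_trans (pow_dvd_pow _ (by omega : t + v + 2 ≤ n - v)) hDdvd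
        simpa using hDdvd'.sub hrest
      · -- ⇐
        intro hkk
        rw [hnv]
        apply Finset.dvd_sum
        intro i _
        rcases i with _ | i
        · -- first term
          have h2 : (3 : ℤ_[3]) ^ s ∣ ((Nat.choose k 2 : ℕ) : ℤ_[3]) := by
            rw [castc2 k] at hkk
            exact hprime.pow_dvd_of_dvd_mul_left _ h2not hkk
          have := mul_dvd_mul h2 hTdvd
          rw [← pow_add] at this
          simpa using this
        · have := tb _ hTdvd s k (i + 1) (by omega) hkk
          exact dvd_trans (pow_dvd_pow _ (by omega : s + (v + 1) ≤ s + v + 2)) this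
    · -- trivial case
      have hs0 : n - 2 * v - 1 = 0 := by omega
      rw [hs0]
      simp only [pow_zero, one_dvd, iff_true]
      set μ := min v (n - 1) with hμ_def
      have hμ1 : 1 ≤ μ := by omega
      have hμn : n ≤ 2 * μ + 1 := by omega
      have hμia : (3 : ℤ_[3]) ^ μ ∣ ι a₀ := by
        have h1 : (3 : ℤ_[3]) ^ μ ∣ ι a₀ - a₀ :=
          dvd_trans (pow_dvd_pow _ (by omega : μ ≤ n)) hfix
        have h2 : (3 : ℤ_[3]) ^ μ ∣ a₀ :=
          dvd_trans (pow_dvd_pow _ (by omega : μ ≤ v)) ha₀v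
        simpa using h1.add h2
      have hμT : (3 : ℤ_[3]) ^ (μ + 1) ∣ (q - 1) * ι a₀ := by
        rw [pow_succ, mul_comm ((3:ℤ_[3])^μ) 3]
        exact mul_dvd_mul hq1 hμia
      have hterm : (3 : ℤ_[3]) ^ (μ + 1) ∣
          ∑ i ∈ range (k - 1), ((Nat.choose k (i + 2) : ℕ) : ℤ_[3]) *
            ((q - 1) * ι a₀) ^ (i + 1) := by
        apply Finset.dvd_sum
        intro i _
        exact dvd_mul_of_dvd_right
          (dvd_trans hμT (dvd_pow_self _ (Nat.succ_ne_zero i))) _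
      have : (3 : ℤ_[3]) ^ (μ + (μ + 1)) ∣ ι a₀ *
          ∑ i ∈ range (k - 1), ((Nat.choose k (i + 2) : ℕ) : ℤ_[3]) *
            ((q - 1) * ι a₀) ^ (i + 1) := by
        rw [pow_add]
        exact mul_dvd_mul hμia hterm
      exact dvd_trans (pow_dvd_pow _ (by omega : n ≤ μ + (μ + 1))) this
  set s := n - 2 * v - 1 with hs_def
  have hcongr : ∀ (x y : ℤ_[3]) (m : ℕ), (3 : ℤ_[3]) ^ m ∣ x - y →
      ((3 : ℤ_[3]) ^ m ∣ x ↔ (3 : ℤ_[3]) ^ m ∣ y) := by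
    intro x y m h
    constructor
    · intro hx
      simpa using hx.sub h
    · intro hy
      simpa using h.add hy
  -- continuity at c * a₀
  have hca : ContinuousAt ι (c * a₀) := hcont.continuousAt
  rw [Metric.continuousAt_iff] at hca
  obtain ⟨δ, hδpos, hδ⟩ := hca ((3 : ℝ) ^ (-(n : ℤ))) (by positivity)
  obtain ⟨N₀, hN₀⟩ : ∃ N₀ : ℕ, (3 : ℝ)⁻¹ ^ N₀ < δ :=
    exists_pow_lt_of_lt_one hδpos (by norm_num)
  set N := N₀ + n + s with hN_def
  set k := c.appr N with hk_def
  have hk : (3 : ℤ_[3]) ^ N ∣ c - (k : ℤ_[3]) := by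
    have := c.appr_spec N
    rw [Ideal.mem_span_singleton, hp3] at this
    exact this
  have hnormck : ‖c - (k : ℤ_[3])‖ ≤ (3 : ℝ) ^ (-(N : ℤ)) := (hdvd_iff _ _).mp hk
  have hlt : ‖c - (k : ℤ_[3])‖ < δ := by
    calc ‖c - (k : ℤ_[3])‖ ≤ (3 : ℝ) ^ (-(N : ℤ)) := hnormck
      _ ≤ (3 : ℝ) ^ (-(N₀ : ℤ)) := by
        apply zpow_le_zpow_right₀ (by norm_num : (1:ℝ) ≤ 3)
        simp only [neg_le_neg_iff, Nat.cast_le]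
        omega
      _ = (3 : ℝ)⁻¹ ^ N₀ := by
        rw [← zpow_natCast ((3:ℝ)⁻¹) N₀, inv_zpow]
        norm_num
      _ < δ := hN₀
  have h1 : (3 : ℤ_[3]) ^ n ∣ ι (c * a₀) - ι ((k : ℤ_[3]) * a₀) := by
    rw [hdvd_iff]
    have hdist : dist ((k : ℤ_[3]) * a₀) (c * a₀) < δ := by
      rw [dist_eq_norm]
      calc ‖(k : ℤ_[3]) * a₀ - c * a₀‖ = ‖((k : ℤ_[3]) - c) * a₀‖ := by ring_nf
        _ ≤ ‖(k : ℤ_[3]) - c‖ * ‖a₀‖ := norm_mul_le _ _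
        _ ≤ ‖(k : ℤ_[3]) - c‖ * 1 := by
          apply mul_le_mul_of_nonneg_left (PadicInt.norm_le_one a₀) (norm_nonneg _)
        _ = ‖c - (k : ℤ_[3])‖ := by rw [mul_one, norm_sub_rev]
        _ < δ := hlt
    have := hδ hdist
    rw [dist_eq_norm] at this
    have := le_of_lt this
    calc ‖ι (c * a₀) - ι ((k : ℤ_[3]) * a₀)‖
        = ‖ι ((k : ℤ_[3]) * a₀) - ι (c * a₀)‖ := by rw [norm_sub_rev]
      _ ≤ (3 : ℝ) ^ (-(n : ℤ)) := this
  have h2 : (3 : ℤ_[3]) ^ n ∣ (ι (c * a₀) - c * a₀) - (ι ((k : ℤ_[3]) * a₀) - (k : ℤ_[3]) * a₀) := by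
    have h3 : (3 : ℤ_[3]) ^ n ∣ (c - (k : ℤ_[3])) * a₀ :=
      ((dvd_trans (pow_dvd_pow _ (by omega : n ≤ N)) hk).mul_right a₀)
    have : (ι (c * a₀) - c * a₀) - (ι ((k : ℤ_[3]) * a₀) - (k : ℤ_[3]) * a₀)
        = (ι (c * a₀) - ι ((k : ℤ_[3]) * a₀)) - (c - (k : ℤ_[3])) * a₀ := by ring
    rw [this]
    exact h1.sub h3
  have h4 : (3 : ℤ_[3]) ^ s ∣ (c * (c - 1)) - ((k : ℤ_[3]) * ((k : ℤ_[3]) - 1)) := by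
    have hks : (3 : ℤ_[3]) ^ s ∣ c - (k : ℤ_[3]) :=
      dvd_trans (pow_dvd_pow _ (by omega : s ≤ N)) hk
    have : (c * (c - 1)) - ((k : ℤ_[3]) * ((k : ℤ_[3]) - 1))
        = (c - (k : ℤ_[3])) * (c + (k : ℤ_[3]) - 1) := by ring
    rw [this]
    exact hks.mul_right _
  rw [hcongr _ _ n h2, hcongr _ _ s h4]
  exact H k
end
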